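/- arXiv:math/0410066 — 6 statements merged into one kernel-verified Lean document; each statement's English description precedes it below -/
import Mathlib

section
/- There exist constants R₁, R₂ > 0 depending only on the matrix P with the following property: for any two inputs x₁, x₂ : [0,∞) → ℝ^J, each right-continuous with left limits and with x_i(0) ≥ 0 componentwise, and any solutions (y₁, q₁) and (y₂, q₂) of the Skorohod problem with reflection matrix I − Pᵀ and inputs x₁ and x₂ respectively, one has for every t ≥ 0: sup_{0 ≤ τ ≤ t} ‖q₁(τ) − q₂(τ)‖ ≤ R₁ · sup_{0 ≤ τ ≤ t} ‖x₁(τ) − x₂(τ)‖ and sup_{0 ≤ τ ≤ t} ‖y₁(τ) − y₂(τ)‖ ≤ R₂ · sup_{0 ≤ τ ≤ t} ‖x₁(τ) − x₂(τ)‖. -/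
open MeasureTheory Filter Topology

noncomputable section

/-- The `L¹` norm on `ℝ^J`: `‖z‖ = ∑_j |z_j|`. -/
def l1Norm {J : ℕ} (v : Fin J → ℝ) : ℝ := ∑ j, |v j|

/-- The matrix `P` is substochastic (nonnegative entries, row sums at most 1)
and has spectral radius strictly less than one. -/
def IsSubstochasticSpecLtOne {J : ℕ} (P : Matrix (Fin J) (Fin J) ℝ) : Prop :=
  (∀ i j, 0 ≤ P i j) ∧ (∀ i, ∑ j, P i j ≤ 1) ∧
    (∀ μ ∈ spectrum ℂ (P.map (algebraMap ℝ ℂ)), ‖μ‖ < 1)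

/-- `f` is right-continuous with left limits on `[0, ∞)`. -/
def RCLL {J : ℕ} (f : ℝ → Fin J → ℝ) : Prop :=
  (∀ t : ℝ, 0 ≤ t → ContinuousWithinAt f (Set.Ici t) t) ∧
    (∀ t : ℝ, 0 < t → ∃ L : Fin J → ℝ, Tendsto f (nhdsWithin t (Set.Iio t)) (nhds L))

/-- `(y, q)` is a solution of the Skorohod problem on `[0, ∞)` with input `x` and
reflection matrix `I - Pᵀ`. -/
def IsSkorohodSolution {J : ℕ} (P : Matrix (Fin J) (Fin J) ℝ)
    (x y q : ℝ → Fin J → ℝ) : Prop :=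
  (∀ t : ℝ, 0 ≤ t → q t = x t + (1 - P.transpose).mulVec (y t)) ∧
  (∀ t : ℝ, 0 ≤ t → ∀ j, 0 ≤ q t j) ∧
  y 0 = 0 ∧
  (∀ j, MonotoneOn (fun s => y s j) (Set.Ici (0 : ℝ))) ∧
  (∀ j, ∀ t : ℝ, 0 ≤ t → ContinuousWithinAt (fun s => y s j) (Set.Ici t) t) ∧
  (∀ j, ∃ F : StieltjesFunction ℝ,
    (∀ s : ℝ, F s = y (max s 0) j) ∧
    ∀ t : ℝ, 0 ≤ t → ∫ s in Set.Icc (0 : ℝ) t, q s j ∂F.measure = 0)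

attribute [local instance] Matrix.linftyOpNormedRing Matrix.linftyOpNormedAlgebra

lemma spectral_pow {J : ℕ} (P : Matrix (Fin J) (Fin J) ℝ)
    (h : ∀ μ ∈ spectrum ℂ (P.map (algebraMap ℝ ℂ)), ‖μ‖ < 1) :
    ∃ n : ℕ, 1 ≤ n ∧ ∃ c : ℝ, 0 ≤ c ∧ c < 1 ∧ ∀ i, ∑ k, |(P ^ n) i k| ≤ c := by
  set A := P.map (algebraMap ℝ ℂ) with hA
  have hsr : spectralRadius ℂ A < 1 := by
    rcases Set.eq_empty_or_nonempty (spectrum ℂ A) with he | hne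
    · rw [spectralRadius, he]; simp
    · have hc : IsCompact (spectrum ℂ A) := spectrum.isCompact A
      obtain ⟨μ₀, hμ₀, hmax⟩ := hc.exists_isMaxOn hne (continuous_norm.continuousOn)
      have hle : spectralRadius ℂ A ≤ ↑‖μ₀‖₊ := by
        refine iSup₂_le fun μ hμ => ?_
        exact ENNReal.coe_le_coe.2 (by exact_mod_cast hmax hμ)
      refine lt_of_le_of_lt hle ?_
      exact_mod_cast ENNReal.coe_lt_one_iff.2 (by exact_mod_cast h μ₀ hμ₀)
  have hg := spectrum.pow_nnnorm_pow_one_div_tendsto_nhds_spectralRadius A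
  have hev : ∀ᶠ n : ℕ in atTop, (‖A ^ n‖₊ : ENNReal) ^ (1 / (n:ℝ)) < 1 :=
    hg.eventually_lt_const hsr
  obtain ⟨n, hn⟩ := (hev.and (eventually_ge_atTop 1)).exists
  obtain ⟨hlt, hn1⟩ := hn
  have hAn : ‖A ^ n‖₊ < 1 := by
    by_contra hge
    push_neg at hge
    have : (1 : ENNReal) ≤ (‖A ^ n‖₊ : ENNReal) ^ (1 / (n:ℝ)) := by
      exact ENNReal.one_le_rpow (by exact_mod_cast hge) (by positivity)
    exact absurd hlt (not_lt.2 this)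
  refine ⟨n, hn1, ‖A ^ n‖, ?_, ?_, ?_⟩
  · exact norm_nonneg _
  · exact_mod_cast hAn
  · intro i
    have hAPn : A ^ n = (P ^ n).map (algebraMap ℝ ℂ) := by
      rw [hA, ← RingHom.mapMatrix_apply, ← map_pow, RingHom.mapMatrix_apply]
    have hrow : ∑ k, ‖(A ^ n) i k‖₊ ≤ ‖A ^ n‖₊ := by
      rw [Matrix.linfty_opNNNorm_def]
      exact Finset.le_sup (f := fun i => ∑ j, ‖(A ^ n) i j‖₊) (Finset.mem_univ i)
    have : ∑ k, ‖(A ^ n) i k‖ ≤ ‖A ^ n‖ := by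
      have := NNReal.coe_le_coe.2 hrow
      push_cast at this
      exact this
    refine le_trans (le_of_eq ?_) this
    rw [hAPn]
    refine Finset.sum_congr rfl fun k _ => ?_
    simp [Matrix.map_apply, Complex.norm_real, abs]


lemma continuous_l1Norm {J : ℕ} : Continuous (l1Norm (J := J)) := by
  unfold l1Norm
  exact continuous_finset_sum _ fun j _ => (continuous_apply j).abs

lemma rcll_bounded {J : ℕ} {f : ℝ → Fin J → ℝ} (hf : RCLL f) {T : ℝ} (hT : 0 ≤ T) :
    ∃ C : ℝ, ∀ s ∈ Set.Icc (0:ℝ) T, l1Norm (f s) ≤ C := by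
  set g : ℝ → ℝ := fun s => l1Norm (f s) with hg
  have hgr : ∀ t : ℝ, 0 ≤ t → ContinuousWithinAt g (Set.Ici t) t :=
    fun t ht => (continuous_l1Norm.continuousAt).comp_continuousWithinAt (hf.1 t ht)
  set S : Set ℝ := {s | s ∈ Set.Icc (0:ℝ) T ∧ ∃ C, ∀ r ∈ Set.Icc (0:ℝ) s, g r ≤ C} with hS
  have h0 : (0:ℝ) ∈ S := by
    refine ⟨⟨le_refl _, hT⟩, g 0, fun r hr => ?_⟩
    have : r = 0 := le_antisymm hr.2 hr.1
    simp [this]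
  have hSne : S.Nonempty := ⟨0, h0⟩
  have hSbdd : BddAbove S := ⟨T, fun s hs => hs.1.2⟩
  set c := sSup S with hc
  have hc0 : 0 ≤ c := le_csSup hSbdd h0
  have hcT : c ≤ T := csSup_le hSne fun s hs => hs.1.2
  have hcS : c ∈ S := by
    rcases eq_or_lt_of_le hc0 with h | h
    · rwa [← h]
    · obtain ⟨L, hL⟩ := hf.2 c h
      have hLg : Tendsto g (nhdsWithin c (Set.Iio c)) (nhds (l1Norm L)) :=
        (continuous_l1Norm.tendsto L).comp hL
      have hev : ∀ᶠ r in nhdsWithin c (Set.Iio c), g r ≤ l1Norm L + 1 :=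
        hLg.eventually (eventually_le_nhds (lt_add_one _))
      rw [Filter.eventually_iff, mem_nhdsLT_iff_exists_Ioo_subset] at hev
      obtain ⟨a, (ha : a < c), hsub⟩ := hev
      obtain ⟨s, hsS, hsgt⟩ := exists_lt_of_lt_csSup hSne ha
      obtain ⟨Cs, hCs⟩ := hsS.2
      refine ⟨⟨hc0, hcT⟩, max Cs (max (l1Norm L + 1) (g c)), fun r hr => ?_⟩
      rcases le_or_gt r s with h1 | h1
      · exact le_trans (hCs r ⟨hr.1, h1⟩) (le_max_left _ _)
      · rcases eq_or_lt_of_le hr.2 with h2 | h2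
        · rw [h2]
          exact le_trans (le_max_right _ _) (le_max_right _ _)
        · have : r ∈ Set.Ioo a c := ⟨lt_trans hsgt h1, h2⟩
          exact le_trans (hsub this) (le_trans (le_max_left _ _) (le_max_right _ _))
  have hcTeq : c = T := by
    by_contra hne
    have hlt : c < T := lt_of_le_of_ne hcT hne
    have hrc := hgr c hc0
    have hev : ∀ᶠ r in nhdsWithin c (Set.Ici c), g r ≤ g c + 1 :=
      hrc.eventually (eventually_le_nhds (lt_add_one _))
    rw [Filter.eventually_iff, mem_nhdsGE_iff_exists_Ico_subset] at hev
    obtain ⟨u, (hu : c < u), hsub⟩ := hev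
    set s' := min ((c + u) / 2) T with hs'
    have hcs' : c < s' := lt_min (by linarith) hlt
    obtain ⟨Cc, hCc⟩ := hcS.2
    have hs'S : s' ∈ S := by
      refine ⟨⟨le_trans hc0 hcs'.le, min_le_right _ _⟩, max Cc (g c + 1), fun r hr => ?_⟩
      rcases le_or_gt r c with h1 | h1
      · exact le_trans (hCc r ⟨hr.1, h1⟩) (le_max_left _ _)
      · have : r ∈ Set.Ico c u := ⟨h1.le, lt_of_le_of_lt (le_trans hr.2 (min_le_left _ _)) (by linarith)⟩
        exact le_trans (hsub this) (le_max_right _ _)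
    exact absurd (le_csSup hSbdd hs'S) (not_le.2 hcs')
  obtain ⟨C, hC⟩ := hcS.2
  exact ⟨C, by rwa [hcTeq] at hC⟩


lemma rcll_measurable {J : ℕ} {f : ℝ → Fin J → ℝ} (hf : RCLL f) (j : Fin J) :
    Measurable (fun s => f (max s 0) j) := by
  have hmeas : ∀ n : ℕ, Measurable (fun s : ℝ => f (max (⌈s * 2 ^ n⌉ / 2 ^ n : ℝ) 0) j) := by
    intro n
    have h1 : Measurable (fun s : ℝ => (⌈s * 2 ^ n⌉ : ℤ)) :=
      Int.measurable_ceil.comp (measurable_id.mul_const _)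
    exact (measurable_from_top (f := fun z : ℤ => f (max ((z : ℝ) / 2 ^ n) 0) j)).comp h1
  have htend : ∀ s : ℝ, Tendsto (fun n : ℕ => f (max (⌈s * 2 ^ n⌉ / 2 ^ n : ℝ) 0) j)
      atTop (nhds (f (max s 0) j)) := by
    intro s
    set m := max s 0 with hm
    have hm0 : 0 ≤ m := le_max_right _ _
    have hp : ∀ n : ℕ, max (⌈s * 2 ^ n⌉ / 2 ^ n : ℝ) 0 ∈ Set.Ici m := by
      intro n
      have h2 : (0:ℝ) < 2 ^ n := by positivity
      have : s ≤ (⌈s * 2 ^ n⌉ : ℝ) / 2 ^ n := by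
        rw [le_div_iff₀ h2]
        exact Int.le_ceil _
      exact max_le_max this (le_refl 0)
    have hto : Tendsto (fun n : ℕ => max (⌈s * 2 ^ n⌉ / 2 ^ n : ℝ) 0) atTop (nhds m) := by
      have h1 : Tendsto (fun n : ℕ => ((⌈s * 2 ^ n⌉ : ℝ) / 2 ^ n)) atTop (nhds s) := by
        have hub : ∀ n : ℕ, (⌈s * 2 ^ n⌉ : ℝ) / 2 ^ n ≤ s + (1/2) ^ n := by
          intro n
          have h2 : (0:ℝ) < 2 ^ n := by positivity
          rw [div_le_iff₀ h2]
          calc (⌈s * 2 ^ n⌉ : ℝ) ≤ s * 2 ^ n + 1 := (Int.ceil_lt_add_one _).le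
            _ = (s + (1/2)^n) * 2 ^ n := by ring_nf; rw [one_div, inv_pow, inv_mul_cancel₀ (ne_of_gt h2)]; ring
        have hlb : ∀ n : ℕ, s ≤ (⌈s * 2 ^ n⌉ : ℝ) / 2 ^ n := by
          intro n
          have h2 : (0:ℝ) < 2 ^ n := by positivity
          rw [le_div_iff₀ h2]; exact Int.le_ceil _
        have hsp : Tendsto (fun n : ℕ => s + (1/2:ℝ) ^ n) atTop (nhds s) := by
          have := tendsto_pow_atTop_nhds_zero_of_lt_one (by norm_num : (0:ℝ) ≤ 1/2) (by norm_num : (1/2:ℝ) < 1)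
          simpa using (tendsto_const_nhds.add this)
        exact tendsto_of_tendsto_of_tendsto_of_le_of_le tendsto_const_nhds hsp hlb hub
      exact h1.max tendsto_const_nhds
    have hcw : ContinuousWithinAt f (Set.Ici m) m := hf.1 m hm0
    have : Tendsto (fun n : ℕ => f (max (⌈s * 2 ^ n⌉ / 2 ^ n : ℝ) 0)) atTop (nhds (f m)) := by
      refine hcw.tendsto.comp ?_
      rw [tendsto_nhdsWithin_iff]
      exact ⟨hto, Filter.Eventually.of_forall hp⟩
    exact ((continuous_apply j).tendsto _).comp this
  exact measurable_of_tendsto_metrizable hmeas (tendsto_pi_nhds.2 htend)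


lemma abs_apply_le_l1Norm {J : ℕ} (v : Fin J → ℝ) (j : Fin J) : |v j| ≤ l1Norm v :=
  Finset.single_le_sum (f := fun k => |v k|) (fun k _ => abs_nonneg _) (Finset.mem_univ j)

/-- `q` in component form. -/
lemma skorohod_q_eq {J : ℕ} {P : Matrix (Fin J) (Fin J) ℝ} {x y q : ℝ → Fin J → ℝ}
    (hsol : IsSkorohodSolution P x y q) {s : ℝ} (hs : 0 ≤ s) (j : Fin J) :
    q s j = x s j + y s j - ∑ k, P k j * y s k := by
  have := hsol.1 s hs
  have h2 : q s j = x s j + ((1 - P.transpose).mulVec (y s)) j := by rw [this]; simp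
  rw [h2]
  have h3 : ((1 - P.transpose).mulVec (y s)) j = ∑ k, ((if j = k then (1:ℝ) else 0) - P k j) * y s k := by
    simp [Matrix.mulVec, dotProduct, Matrix.sub_apply, Matrix.one_apply,
      Matrix.transpose_apply]
  rw [h3]
  simp only [sub_mul, Finset.sum_sub_distrib, ite_mul, one_mul, zero_mul,
    Finset.sum_ite_eq, Finset.mem_univ, if_true]
  ring

lemma skorohod_y_nonneg {J : ℕ} {P : Matrix (Fin J) (Fin J) ℝ} {x y q : ℝ → Fin J → ℝ}
    (hsol : IsSkorohodSolution P x y q) {s : ℝ} (hs : 0 ≤ s) (k : Fin J) : 0 ≤ y s k := by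
  have := hsol.2.2.2.1 k (Set.self_mem_Ici) (show s ∈ Set.Ici (0:ℝ) from hs) hs
  simpa [hsol.2.2.1] using this


/-- Key lemma: hard direction of the fixed-point property. -/
lemma skorohod_key {J : ℕ} {P : Matrix (Fin J) (Fin J) ℝ} (hP0 : ∀ i j, 0 ≤ P i j)
    {x y q : ℝ → Fin J → ℝ} (hx : RCLL x) (hsol : IsSkorohodSolution P x y q)
    (j : Fin J) {τ b : ℝ} (hτ : 0 ≤ τ) (hb : 0 ≤ b)
    (hub : ∀ s ∈ Set.Icc (0:ℝ) τ, (∑ k, P k j * y s k) - x s j ≤ b) :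
    y τ j ≤ b := by
  by_contra hbad
  push_neg at hbad
  obtain ⟨F, hF, hInt⟩ := hsol.2.2.2.2.2 j
  have hFs : ∀ s : ℝ, 0 ≤ s → F s = y s j := by
    intro s hs
    rw [hF s, max_eq_left hs]
  -- the set S
  set S : Set ℝ := {s | s ∈ Set.Icc (0:ℝ) τ ∧ y s j ≤ b} with hS
  have h0S : (0:ℝ) ∈ S := ⟨⟨le_refl _, hτ⟩, by rw [hsol.2.2.1]; simpa using hb⟩
  have hSne : S.Nonempty := ⟨0, h0S⟩
  have hSbdd : BddAbove S := ⟨τ, fun s hs => hs.1.2⟩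
  set s₀ := sSup S with hs₀
  have hs₀0 : 0 ≤ s₀ := le_csSup hSbdd h0S
  have hs₀τ : s₀ ≤ τ := csSup_le hSne fun s hs => hs.1.2
  have hgt : ∀ s : ℝ, s₀ < s → s ≤ τ → b < y s j := by
    intro s h1 h2
    by_contra hle
    push_neg at hle
    exact absurd (le_csSup hSbdd ⟨⟨le_trans hs₀0 h1.le, h2⟩, hle⟩) (not_le.2 h1)
  -- integrability of q_j on Icc 0 τ
  set μ := F.measure with hμ
  have hIccfin : μ (Set.Icc (0:ℝ) τ) ≠ ⊤ := by
    rw [F.measure_Icc]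
    exact ENNReal.ofReal_ne_top
  set g : ℝ → ℝ := fun s => x (max s 0) j + y (max s 0) j - ∑ k, P k j * y (max s 0) k with hg
  have hgm : Measurable g := by
    have h1 : Measurable fun s : ℝ => x (max s 0) j := rcll_measurable hx j
    have hyk : ∀ k : Fin J, Measurable fun s : ℝ => y (max s 0) k := by
      intro k
      have : Monotone fun s : ℝ => y (max s 0) k := by
        intro a a' haa'
        exact hsol.2.2.2.1 k (le_max_right a 0) (le_max_right a' 0)
          (max_le_max haa' (le_refl 0))
      exact this.measurable
    exact ((h1.add (hyk j)).sub (Finset.measurable_sum _ fun k _ => (hyk k).const_mul _))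
  have hgq : Set.EqOn (fun s => q s j) g (Set.Icc (0:ℝ) τ) := by
    intro s hs
    have : max s 0 = s := max_eq_left hs.1
    simp only [hg, this]
    exact skorohod_q_eq ⟨hsol.1, hsol.2⟩ hs.1 j
  have hae : (fun s => q s j) =ᵐ[μ.restrict (Set.Icc (0:ℝ) τ)] g := by
    refine (ae_restrict_iff' measurableSet_Icc).2 (ae_of_all _ fun s hs => hgq hs)
  have hasm : AEStronglyMeasurable (fun s => q s j) (μ.restrict (Set.Icc (0:ℝ) τ)) :=
    (hgm.aestronglyMeasurable).congr hae.symm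
  obtain ⟨C, hC⟩ := rcll_bounded hx hτ
  have hMbd : ∀ᵐ s ∂μ.restrict (Set.Icc (0:ℝ) τ), ‖q s j‖ ≤ C + y τ j := by
    refine (ae_restrict_iff' measurableSet_Icc).2 (ae_of_all _ fun s hs => ?_)
    have hq0 : 0 ≤ q s j := hsol.2.1 s hs.1 j
    have heq := skorohod_q_eq ⟨hsol.1, hsol.2⟩ hs.1 j
    have hPy : 0 ≤ ∑ k, P k j * y s k :=
      Finset.sum_nonneg fun k _ => mul_nonneg (hP0 k j) (skorohod_y_nonneg hsol hs.1 k)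
    have hxb : x s j ≤ C := le_trans (le_trans (le_abs_self _) (abs_apply_le_l1Norm _ j)) (hC s hs)
    have hyb : y s j ≤ y τ j := hsol.2.2.2.1 j hs.1 hτ hs.2
    rw [Real.norm_eq_abs, abs_of_nonneg hq0, heq]
    linarith
  have hint : Integrable (fun s => q s j) (μ.restrict (Set.Icc (0:ℝ) τ)) :=
    ⟨hasm, HasFiniteIntegral.restrict_of_bounded _ hIccfin.lt_top hMbd⟩
  have hnn : 0 ≤ᵐ[μ.restrict (Set.Icc (0:ℝ) τ)] fun s => q s j :=
    (ae_restrict_iff' measurableSet_Icc).2 (ae_of_all _ fun s hs => hsol.2.1 s hs.1 j)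
  have hzero : ∫ s in Set.Icc (0:ℝ) τ, q s j ∂μ = 0 := hInt τ hτ
  have haezero : (fun s => q s j) =ᵐ[μ.restrict (Set.Icc (0:ℝ) τ)] 0 :=
    (integral_eq_zero_iff_of_nonneg_ae hnn hint).1 hzero
  have hnullset : μ.restrict (Set.Icc (0:ℝ) τ) {s | q s j ≠ 0} = 0 := by
    have := haezero
    rw [Filter.EventuallyEq, ae_iff] at this
    simpa using this
  -- main case split
  rcases le_or_gt (y s₀ j) b with hcase | hcase
  · -- Case A : positive measure on Ioc s₀ τ
    have hs₀τ' : s₀ < τ := by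
      rcases eq_or_lt_of_le hs₀τ with h | h
      · exfalso; rw [h] at hcase; linarith
      · exact h
    have hsubset : Set.Ioc s₀ τ ⊆ {s | q s j ≠ 0} := by
      intro s hsm
      have hs0 : 0 ≤ s := le_trans hs₀0 hsm.1.le
      have hyb : b < y s j := hgt s hsm.1 hsm.2
      have heq := skorohod_q_eq ⟨hsol.1, hsol.2⟩ hs0 j
      have hubs := hub s ⟨hs0, hsm.2⟩
      have : 0 < q s j := by rw [heq]; linarith
      exact ne_of_gt this
    have hmeaspos : 0 < μ (Set.Ioc s₀ τ) := by
      rw [hμ, F.measure_Ioc, hFs τ hτ, hFs s₀ hs₀0]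
      rw [ENNReal.ofReal_pos]
      linarith
    have hle : μ (Set.Ioc s₀ τ) ≤ 0 := by
      have h1 : μ.restrict (Set.Icc (0:ℝ) τ) (Set.Ioc s₀ τ) = μ (Set.Ioc s₀ τ) := by
        rw [Measure.restrict_apply' measurableSet_Icc]
        congr 1
        rw [Set.inter_eq_left]
        exact fun s hs => ⟨le_trans hs₀0 hs.1.le, hs.2⟩
      calc μ (Set.Ioc s₀ τ) = μ.restrict (Set.Icc (0:ℝ) τ) (Set.Ioc s₀ τ) := h1.symm
        _ ≤ μ.restrict (Set.Icc (0:ℝ) τ) {s | q s j ≠ 0} := measure_mono hsubset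
        _ = 0 := hnullset
    exact absurd hle (not_le.2 hmeaspos)
  · -- Case B : atom at s₀
    have hs₀pos : 0 < s₀ := by
      rcases eq_or_lt_of_le hs₀0 with h | h
      · exfalso
        rw [← h] at hcase
        have : y 0 j = 0 := by simp [hsol.2.2.1]
        linarith
      · exact h
    have hll : Function.leftLim F s₀ ≤ b := by
      have htend := F.mono.tendsto_leftLim s₀
      refine le_of_tendsto htend ?_
      filter_upwards [Ioo_mem_nhdsLT_of_mem (show s₀ ∈ Set.Ioc (0:ℝ) s₀ from ⟨hs₀pos, le_refl _⟩)]
        with s hs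
      obtain ⟨s', hs'S, hss'⟩ := exists_lt_of_lt_csSup hSne hs.2
      rw [hFs s hs.1.le]
      exact le_trans (hsol.2.2.2.1 j hs.1.le (le_trans hs.1.le hss'.le) hss'.le) hs'S.2
    have hq0pos : 0 < q s₀ j := by
      have heq := skorohod_q_eq ⟨hsol.1, hsol.2⟩ hs₀0 j
      have hubs := hub s₀ ⟨hs₀0, hs₀τ⟩
      rw [heq]; linarith
    have hmeaspos : 0 < μ {s₀} := by
      rw [hμ, F.measure_singleton, ENNReal.ofReal_pos, hFs s₀ hs₀0]
      linarith
    have hle : μ {s₀} ≤ 0 := by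
      have h1 : μ.restrict (Set.Icc (0:ℝ) τ) {s₀} = μ {s₀} := by
        rw [Measure.restrict_apply' measurableSet_Icc]
        congr 1
        rw [Set.inter_eq_left]
        exact fun s hs => by rw [Set.mem_singleton_iff] at hs; exact hs ▸ ⟨hs₀0, hs₀τ⟩
      calc μ {s₀} = μ.restrict (Set.Icc (0:ℝ) τ) {s₀} := h1.symm
        _ ≤ μ.restrict (Set.Icc (0:ℝ) τ) {s | q s j ≠ 0} :=
            measure_mono (fun s hs => by rw [Set.mem_singleton_iff] at hs; exact hs ▸ ne_of_gt hq0pos)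
        _ = 0 := hnullset
    exact absurd hle (not_le.2 hmeaspos)


lemma l1Norm_nonneg {J : ℕ} (v : Fin J → ℝ) : 0 ≤ l1Norm v :=
  Finset.sum_nonneg fun k _ => abs_nonneg _

lemma l1Norm_sub_le {J : ℕ} (u v : Fin J → ℝ) : l1Norm (u - v) ≤ l1Norm u + l1Norm v := by
  unfold l1Norm
  rw [← Finset.sum_add_distrib]
  exact Finset.sum_le_sum fun k _ => abs_sub (u k) (v k)


/-- substochastic powers -/
lemma substoch_pow {J : ℕ} {P : Matrix (Fin J) (Fin J) ℝ} (h0 : ∀ i j, 0 ≤ P i j)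
    (h1 : ∀ i, ∑ j, P i j ≤ 1) (n : ℕ) :
    (∀ i k, 0 ≤ (P ^ n) i k) ∧ ∀ i, ∑ k, (P ^ n) i k ≤ 1 := by
  induction n with
  | zero =>
      constructor
      · intro i k
        by_cases h : i = k <;> simp [Matrix.one_apply, h]
      · intro i
        simp [Matrix.one_apply]
  | succ n ih =>
      have hent : ∀ i k, (P ^ (n+1)) i k = ∑ l, P i l * (P ^ n) l k := by
        intro i k
        rw [pow_succ'] -- P^(n+1) = P * P^n
        simp [Matrix.mul_apply]
      constructor
      · intro i k
        rw [hent]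
        exact Finset.sum_nonneg fun l _ => mul_nonneg (h0 i l) (ih.1 l k)
      · intro i
        calc ∑ k, (P ^ (n+1)) i k = ∑ l, P i l * ∑ k, (P ^ n) l k := by
              simp only [hent]
              rw [Finset.sum_comm]
              simp [Finset.mul_sum]
          _ ≤ ∑ l, P i l * 1 := Finset.sum_le_sum fun l _ =>
              mul_le_mul_of_nonneg_left (ih.2 l) (h0 i l)
          _ ≤ 1 := by simpa using h1 i

/-- Lipschitz continuity of the oblique reflection mapping: the solutions of the
Skorohod problem depend Lipschitz-continuously (in the uniform norm on `[0, t]`,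
with the `L¹` norm on `ℝ^J`) on the input, with constants depending only on `P`. -/
theorem skorohod_lipschitz {J : ℕ} (hJ : 1 ≤ J)
    (P : Matrix (Fin J) (Fin J) ℝ) (hP : IsSubstochasticSpecLtOne P) :
    ∃ R₁ R₂ : ℝ, 0 < R₁ ∧ 0 < R₂ ∧
      ∀ x₁ x₂ y₁ q₁ y₂ q₂ : ℝ → Fin J → ℝ,
        RCLL x₁ → RCLL x₂ → (∀ j, 0 ≤ x₁ 0 j) → (∀ j, 0 ≤ x₂ 0 j) →
        IsSkorohodSolution P x₁ y₁ q₁ → IsSkorohodSolution P x₂ y₂ q₂ →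
        ∀ t : ℝ, 0 ≤ t →
          (⨆ τ : Set.Icc (0 : ℝ) t, l1Norm (q₁ τ - q₂ τ)) ≤
              R₁ * ⨆ τ : Set.Icc (0 : ℝ) t, l1Norm (x₁ τ - x₂ τ) ∧
          (⨆ τ : Set.Icc (0 : ℝ) t, l1Norm (y₁ τ - y₂ τ)) ≤
              R₂ * ⨆ τ : Set.Icc (0 : ℝ) t, l1Norm (x₁ τ - x₂ τ) := by
  obtain ⟨hP0, hP1, hPs⟩ := hP
  obtain ⟨n, hn1, c, hc0, hc1, hcn⟩ := spectral_pow P hPs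
  have hJ0 : (0:ℝ) < J := by exact_mod_cast Nat.lt_of_lt_of_le Nat.zero_lt_one hJ
  have hn0 : (0:ℝ) < n := by exact_mod_cast Nat.lt_of_lt_of_le Nat.zero_lt_one hn1
  set R₂ : ℝ := (n * J : ℝ) / (1 - c) with hR₂
  have hR₂pos : 0 < R₂ := div_pos (by positivity) (by linarith)
  refine ⟨1 + 2 * R₂, R₂, by linarith, hR₂pos, ?_⟩
  intro x₁ x₂ y₁ q₁ y₂ q₂ hx₁ hx₂ hx₁0 hx₂0 hsol₁ hsol₂ t ht
  haveI : Nonempty (Set.Icc (0:ℝ) t) := (Set.nonempty_Icc.2 ht).to_subtype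
  set D := ⨆ τ : Set.Icc (0:ℝ) t, l1Norm (x₁ τ - x₂ τ) with hD
  obtain ⟨C₁, hC₁⟩ := rcll_bounded hx₁ ht
  obtain ⟨C₂, hC₂⟩ := rcll_bounded hx₂ ht
  have hDbdd : BddAbove (Set.range fun τ : Set.Icc (0:ℝ) t => l1Norm (x₁ τ - x₂ τ)) := by
    refine ⟨C₁ + C₂, fun r hr => ?_⟩
    obtain ⟨τ, rfl⟩ := hr
    exact le_trans (l1Norm_sub_le _ _) (add_le_add (hC₁ τ τ.2) (hC₂ τ τ.2))
  have hDub : ∀ τ : ℝ, τ ∈ Set.Icc (0:ℝ) t → l1Norm (x₁ τ - x₂ τ) ≤ D := fun τ hτ =>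
    le_ciSup hDbdd (⟨τ, hτ⟩ : Set.Icc (0:ℝ) t)
  have hD0 : 0 ≤ D := le_trans (l1Norm_nonneg _) (hDub 0 ⟨le_refl _, ht⟩)
  have hΔx : ∀ (j : Fin J) (s : ℝ), s ∈ Set.Icc (0:ℝ) t → |x₁ s j - x₂ s j| ≤ D := by
    intro j s hs
    exact le_trans (abs_apply_le_l1Norm (x₁ s - x₂ s) j) (hDub s hs)
  set m : Fin J → ℝ := fun k => ⨆ τ : Set.Icc (0:ℝ) t, |y₁ τ k - y₂ τ k| with hm
  have hmbdd : ∀ k, BddAbove (Set.range fun τ : Set.Icc (0:ℝ) t => |y₁ τ k - y₂ τ k|) := by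
    intro k
    refine ⟨y₁ t k + y₂ t k, fun r hr => ?_⟩
    obtain ⟨τ, rfl⟩ := hr
    have h₁ : y₁ τ k ≤ y₁ t k := hsol₁.2.2.2.1 k τ.2.1 ht τ.2.2
    have h₂ : y₂ τ k ≤ y₂ t k := hsol₂.2.2.2.1 k τ.2.1 ht τ.2.2
    have h₃ : 0 ≤ y₁ τ k := skorohod_y_nonneg hsol₁ τ.2.1 k
    have h₄ : 0 ≤ y₂ τ k := skorohod_y_nonneg hsol₂ τ.2.1 k
    calc |y₁ τ k - y₂ τ k| ≤ |y₁ τ k| + |y₂ τ k| := abs_sub _ _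
      _ = y₁ τ k + y₂ τ k := by rw [abs_of_nonneg h₃, abs_of_nonneg h₄]
      _ ≤ y₁ t k + y₂ t k := add_le_add h₁ h₂
  have hmub : ∀ (k : Fin J) (s : ℝ), s ∈ Set.Icc (0:ℝ) t → |y₁ s k - y₂ s k| ≤ m k :=
    fun k s hs => le_ciSup (hmbdd k) (⟨s, hs⟩ : Set.Icc (0:ℝ) t)
  have hm0 : ∀ k, 0 ≤ m k := fun k => le_trans (abs_nonneg _) (hmub k 0 ⟨le_refl _, ht⟩)
  -- one-step estimate
  have hstep : ∀ j, m j ≤ (∑ k, P k j * m k) + D := by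
    intro j
    have hBnn : 0 ≤ (∑ k, P k j * m k) + D :=
      add_nonneg (Finset.sum_nonneg fun k _ => mul_nonneg (hP0 k j) (hm0 k)) hD0
    refine Real.iSup_le ?_ hBnn
    intro τ
    have hτ : (τ : ℝ) ∈ Set.Icc (0:ℝ) t := τ.2
    have hkey : ∀ (xa xb : ℝ → Fin J → ℝ) (ya qa yb qb : ℝ → Fin J → ℝ),
        RCLL xa → IsSkorohodSolution P xa ya qa → IsSkorohodSolution P xb yb qb →
        (∀ (jj : Fin J) (s : ℝ), s ∈ Set.Icc (0:ℝ) t → |xa s jj - xb s jj| ≤ D) →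
        (∀ (k : Fin J) (s : ℝ), s ∈ Set.Icc (0:ℝ) t → |ya s k - yb s k| ≤ m k) →
        ya τ j - yb τ j ≤ (∑ k, P k j * m k) + D := by
      intro xa xb ya qa yb qb hxa hsa hsb hdx hdy
      have hb0 : 0 ≤ yb τ j + ((∑ k, P k j * m k) + D) :=
        add_nonneg (skorohod_y_nonneg hsb hτ.1 j) hBnn
      have hub : ∀ s ∈ Set.Icc (0:ℝ) (τ:ℝ),
          (∑ k, P k j * ya s k) - xa s j ≤ yb τ j + ((∑ k, P k j * m k) + D) := by
        intro s hs
        have hs' : s ∈ Set.Icc (0:ℝ) t := ⟨hs.1, le_trans hs.2 hτ.2⟩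
        have hqb : 0 ≤ qb s j := hsb.2.1 s hs.1 j
        have heqb := skorohod_q_eq hsb hs.1 j
        have heasy : (∑ k, P k j * yb s k) - xb s j ≤ yb s j := by
          rw [heqb] at hqb; linarith
        have hsum : ∑ k, P k j * ya s k - ∑ k, P k j * yb s k ≤ ∑ k, P k j * m k := by
          rw [← Finset.sum_sub_distrib]
          refine Finset.sum_le_sum fun k _ => ?_
          rw [← mul_sub]
          exact mul_le_mul_of_nonneg_left
            (le_trans (le_abs_self _) (hdy k s hs')) (hP0 k j)
        have hxd : xb s j - xa s j ≤ D := by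
          have h' := hdx j s hs'
          rw [abs_sub_comm] at h'
          exact le_trans (le_abs_self _) h'
        have hymon : yb s j ≤ yb τ j := hsb.2.2.2.1 j hs.1 (le_trans hs.1 hs.2) hs.2
        linarith
      have h := skorohod_key hP0 hxa hsa j hτ.1 hb0 hub
      linarith
    rw [abs_sub_le_iff]
    constructor
    · exact hkey x₁ x₂ y₁ q₁ y₂ q₂ hx₁ hsol₁ hsol₂ hΔx hmub
    · refine hkey x₂ x₁ y₂ q₂ y₁ q₁ hx₂ hsol₂ hsol₁ ?_ ?_
      · intro jj s hs; rw [abs_sub_comm]; exact hΔx jj s hs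
      · intro k s hs; rw [abs_sub_comm]; exact hmub k s hs
  -- iterated estimate
  have hiter : ∀ N : ℕ, (∑ j, m j) ≤ (∑ k, (∑ l, (P ^ N) k l) * m k) + N * (J * D) := by
    intro N
    induction N with
    | zero => simp [Matrix.one_apply]
    | succ N ih =>
        have hrow := substoch_pow hP0 hP1 N
        have hent : ∀ i l, (P ^ (N+1)) i l = ∑ k, P i k * (P ^ N) k l := by
          intro i l
          rw [pow_succ']
          simp [Matrix.mul_apply]
        have h1 : ∑ k, (∑ l, (P ^ N) k l) * m k ≤
            ∑ k, (∑ l, (P ^ N) k l) * ((∑ i, P i k * m i) + D) := by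
          refine Finset.sum_le_sum fun k _ => ?_
          exact mul_le_mul_of_nonneg_left (hstep k)
            (Finset.sum_nonneg fun l _ => (hrow.1 k l))
        have h2 : ∑ k, (∑ l, (P ^ N) k l) * ((∑ i, P i k * m i) + D) =
            (∑ i, (∑ k, (∑ l, (P ^ N) k l) * P i k) * m i) +
              (∑ k, (∑ l, (P ^ N) k l)) * D := by
          simp only [mul_add, Finset.sum_add_distrib, Finset.mul_sum]
          congr 1
          · rw [Finset.sum_comm]
            refine Finset.sum_congr rfl fun i _ => ?_
            rw [Finset.sum_mul]
            refine Finset.sum_congr rfl fun k _ => by ring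
          · rw [Finset.sum_mul]
        have h3 : ∀ i, (∑ k, (∑ l, (P ^ N) k l) * P i k) = ∑ l, (P ^ (N+1)) i l := by
          intro i
          have : ∑ l, (P ^ (N+1)) i l = ∑ l, ∑ k, P i k * (P ^ N) k l := by
            refine Finset.sum_congr rfl fun l _ => hent i l
          rw [this, Finset.sum_comm]
          refine Finset.sum_congr rfl fun k _ => ?_
          rw [← Finset.mul_sum]
          ring
        have h4 : (∑ k, (∑ l, (P ^ N) k l)) * D ≤ J * D := by
          refine mul_le_mul_of_nonneg_right ?_ hD0
          calc ∑ k, (∑ l, (P ^ N) k l) ≤ ∑ _k : Fin J, (1:ℝ) :=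
                Finset.sum_le_sum fun k _ => hrow.2 k
            _ = J := by simp
        have h5 : ∑ k, (∑ l, (P ^ N) k l) * m k ≤
            (∑ i, (∑ l, (P ^ (N+1)) i l) * m i) + J * D := by
          calc ∑ k, (∑ l, (P ^ N) k l) * m k
              ≤ ∑ k, (∑ l, (P ^ N) k l) * ((∑ i, P i k * m i) + D) := h1
            _ = (∑ i, (∑ k, (∑ l, (P ^ N) k l) * P i k) * m i) +
                (∑ k, (∑ l, (P ^ N) k l)) * D := h2
            _ ≤ (∑ i, (∑ k, (∑ l, (P ^ N) k l) * P i k) * m i) + J * D := by linarith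
            _ = (∑ i, (∑ l, (P ^ (N+1)) i l) * m i) + J * D := by
                congr 1
                exact Finset.sum_congr rfl fun i _ => by rw [h3 i]
        calc (∑ j, m j) ≤ (∑ k, (∑ l, (P ^ N) k l) * m k) + N * (J * D) := ih
          _ ≤ ((∑ k, (∑ l, (P ^ (N+1)) k l) * m k) + J * D) + N * (J * D) := by linarith
          _ = (∑ k, (∑ l, (P ^ (N+1)) k l) * m k) + (N + 1 : ℕ) * (J * D) := by
              push_cast; ring
  have hfinal : ∑ j, m j ≤ R₂ * D := by
    have h1 := hiter n
    have h2 : ∑ k, (∑ l, (P ^ n) k l) * m k ≤ c * ∑ k, m k := by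
      rw [Finset.mul_sum]
      refine Finset.sum_le_sum fun k _ => ?_
      refine mul_le_mul_of_nonneg_right ?_ (hm0 k)
      exact le_trans (Finset.sum_le_sum fun l _ => le_abs_self _) (hcn k)
    have h3 : (1 - c) * (∑ j, m j) ≤ (n:ℝ) * (J * D) := by linarith
    rw [hR₂, div_mul_eq_mul_div, le_div_iff₀ (by linarith : (0:ℝ) < 1 - c)]
    linarith
  have hy : ∀ s : ℝ, s ∈ Set.Icc (0:ℝ) t → l1Norm (y₁ s - y₂ s) ≤ R₂ * D := by
    intro s hs
    have h1 : l1Norm (y₁ s - y₂ s) ≤ ∑ j, m j := by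
      refine Finset.sum_le_sum fun j _ => ?_
      exact hmub j s hs
    linarith
  constructor
  · refine Real.iSup_le ?_ (mul_nonneg (by linarith) hD0)
    intro τ
    have hτ : (τ : ℝ) ∈ Set.Icc (0:ℝ) t := τ.2
    have hqj : ∀ j, |q₁ τ j - q₂ τ j| ≤
        |x₁ τ j - x₂ τ j| + |y₁ τ j - y₂ τ j| + ∑ k, P k j * |y₁ τ k - y₂ τ k| := by
      intro j
      rw [skorohod_q_eq hsol₁ hτ.1 j, skorohod_q_eq hsol₂ hτ.1 j]
      have habs3 : |∑ k, P k j * y₁ τ k - ∑ k, P k j * y₂ τ k| ≤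
          ∑ k, P k j * |y₁ τ k - y₂ τ k| := by
        rw [← Finset.sum_sub_distrib]
        refine le_trans (Finset.abs_sum_le_sum_abs _ _) (Finset.sum_le_sum fun k _ => ?_)
        rw [← mul_sub, abs_mul, abs_of_nonneg (hP0 k j)]
      have hrearr : x₁ τ j + y₁ τ j - ∑ k, P k j * y₁ τ k -
          (x₂ τ j + y₂ τ j - ∑ k, P k j * y₂ τ k) =
          ((x₁ τ j - x₂ τ j) + (y₁ τ j - y₂ τ j)) -
          (∑ k, P k j * y₁ τ k - ∑ k, P k j * y₂ τ k) := by ring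
      rw [hrearr]
      refine le_trans (abs_sub _ _) ?_
      have := abs_add_le (x₁ τ j - x₂ τ j) (y₁ τ j - y₂ τ j)
      linarith
    have hsum : l1Norm (q₁ τ - q₂ τ) ≤
        l1Norm (x₁ τ - x₂ τ) + l1Norm (y₁ τ - y₂ τ) +
          ∑ j, ∑ k, P k j * |y₁ τ k - y₂ τ k| := by
      unfold l1Norm
      rw [← Finset.sum_add_distrib, ← Finset.sum_add_distrib]
      refine Finset.sum_le_sum fun j _ => ?_
      exact hqj j
    have hthird : ∑ j, ∑ k, P k j * |y₁ τ k - y₂ τ k| ≤ l1Norm (y₁ τ - y₂ τ) := by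
      rw [Finset.sum_comm]
      unfold l1Norm
      refine Finset.sum_le_sum fun k _ => ?_
      rw [← Finset.sum_mul]
      have : (y₁ τ - y₂ τ) k = y₁ τ k - y₂ τ k := rfl
      rw [this]
      calc (∑ j, P k j) * |y₁ τ k - y₂ τ k| ≤ 1 * |y₁ τ k - y₂ τ k| :=
            mul_le_mul_of_nonneg_right (hP1 k) (abs_nonneg _)
        _ = |y₁ τ k - y₂ τ k| := one_mul _
    have hxD := hDub τ hτ
    have hyD := hy τ hτ
    linarith
  · exact Real.iSup_le (fun τ => hy τ τ.2) (mul_nonneg hR₂pos.le hD0)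

end
end

section
/- Let z ∈ ℝ^J with z ≥ 0 componentwise, let α ∈ ℝ^J with α ≥ 0 componentwise, let μ ∈ ℝ^J with μ_j > 0 for all j, set λ = (I − Pᵀ)⁻¹ α and ρ_j = λ_j / μ_j, and assume ρ_j < 1 for every j. Let w = (I − P)⁻¹ e, where e is the all-ones vector, define the linear input x(t) = z + (α − (I − Pᵀ)μ)·t, and let (y, q) be a solution of the Skorohod problem with input x and reflection matrix I − Pᵀ. Then q(t) = 0 for every t ≥ (wᵀ z) / (min_{1 ≤ j ≤ J} μ_j (1 − ρ_j)). -/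
open MeasureTheory Filter Topology

noncomputable section

attribute [local instance] Matrix.linftyOpNormedRing Matrix.linftyOpNormedAlgebra

namespace FluidAux

variable {J : ℕ}

lemma entry_le_norm (M : Matrix (Fin J) (Fin J) ℝ) (i j : Fin J) : |M i j| ≤ ‖M‖ := by
  have h : ‖M i j‖₊ ≤ ‖M‖₊ := by
    rw [Matrix.linfty_opNNNorm_def]
    calc ‖M i j‖₊ ≤ ∑ j', ‖M i j'‖₊ :=
          Finset.single_le_sum (f := fun j' => ‖M i j'‖₊) (fun _ _ => zero_le) (Finset.mem_univ j)
      _ ≤ Finset.univ.sup fun i => ∑ j', ‖M i j'‖₊ :=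
          Finset.le_sup (f := fun i => ∑ j', ‖M i j'‖₊) (Finset.mem_univ i)
  exact_mod_cast h

lemma complete : CompleteSpace (Matrix (Fin J) (Fin J) ℂ) :=
  inferInstance

lemma norm_map_complex (M : Matrix (Fin J) (Fin J) ℝ) :
    ‖M.map (algebraMap ℝ ℂ)‖ = ‖M‖ := by
  have h : ‖M.map (algebraMap ℝ ℂ)‖₊ = ‖M‖₊ := by
    rw [Matrix.linfty_opNNNorm_def, Matrix.linfty_opNNNorm_def]
    apply Finset.sup_congr rfl
    intro i _
    apply Finset.sum_congr rfl
    intro j _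
    simp [Matrix.map_apply]
  calc ‖M.map (algebraMap ℝ ℂ)‖ = (‖M.map (algebraMap ℝ ℂ)‖₊ : ℝ) := (coe_nnnorm _).symm
    _ = (‖M‖₊ : ℝ) := by rw [h]
    _ = ‖M‖ := coe_nnnorm _

lemma pow_small (hJ : 0 < J) (P : Matrix (Fin J) (Fin J) ℝ)
    (hspec : ∀ μ ∈ spectrum ℂ (P.map (algebraMap ℝ ℂ)), ‖μ‖ < 1) :
    ∀ δ : ℝ, 0 < δ → ∃ N, ∀ i j, |(P ^ N) i j| ≤ δ := by
  haveI : NeZero J := ⟨hJ.ne'⟩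
  haveI : CompleteSpace (Matrix (Fin J) (Fin J) ℂ) := complete
  set A : Matrix (Fin J) (Fin J) ℂ := P.map (algebraMap ℝ ℂ) with hA
  have hrad : spectralRadius ℂ A < 1 := by
    have := spectrum.spectralRadius_lt_of_forall_lt A (r := 1) ?_
    · simpa using this
    · intro z hz
      have := hspec z hz
      rwa [← coe_nnnorm, ← NNReal.coe_one, NNReal.coe_lt_coe] at this
  have hgel := spectrum.pow_nnnorm_pow_one_div_tendsto_nhds_spectralRadius A
  have hev : ∀ᶠ n : ℕ in atTop, ((‖A ^ n‖₊ : ENNReal) ^ (1 / (n:ℝ))) < 1 :=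
    hgel.eventually (Filter.Tendsto.eventually_lt_const hrad tendsto_id)
  obtain ⟨n, hn1, hn⟩ := (hev.and (eventually_ge_atTop 1)).exists
  have hAn : ‖A ^ n‖₊ < 1 := by
    by_contra hcon
    push_neg at hcon
    have h1 : (1 : ENNReal) ≤ ((‖A ^ n‖₊ : ENNReal)) ^ (1 / (n:ℝ)) := by
      calc (1 : ENNReal) = 1 ^ (1/(n:ℝ)) := (ENNReal.one_rpow _).symm
        _ ≤ ((‖A ^ n‖₊ : ENNReal)) ^ (1 / (n:ℝ)) := by
            apply ENNReal.rpow_le_rpow _ (by positivity)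
            exact_mod_cast hcon
    exact absurd hn1 (not_lt.mpr h1)
  have hPn : ‖P ^ n‖ < 1 := by
    have : A ^ n = (P ^ n).map (algebraMap ℝ ℂ) := by
      simp only [hA, ← RingHom.mapMatrix_apply, ← map_pow]
    have h2 : ‖A ^ n‖ < 1 := by
      rw [← coe_nnnorm]; exact_mod_cast hAn
    rwa [this, norm_map_complex] at h2
  set c : ℝ := ‖P ^ n‖ with hc
  have hc0 : 0 ≤ c := norm_nonneg _
  intro δ hδ
  obtain ⟨k, hk⟩ := exists_pow_lt_of_lt_one hδ hPn
  refine ⟨n * k, fun i j => ?_⟩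
  have h3 : ‖P ^ (n * k)‖ ≤ c ^ k := by
    rw [pow_mul]
    rcases Nat.eq_zero_or_pos k with hk0 | hk0
    · simp [hk0]
    · exact norm_pow_le' _ hk0
  exact (entry_le_norm _ i j).trans (h3.trans hk.le)

end FluidAux

lemma mulVec_mono (M : Matrix (Fin J) (Fin J) ℝ) (hM : ∀ i j, 0 ≤ M i j)
    {a b : Fin J → ℝ} (h : ∀ j, a j ≤ b j) : ∀ j, M.mulVec a j ≤ M.mulVec b j := by
  intro j
  simp only [Matrix.mulVec, dotProduct]
  exact Finset.sum_le_sum fun k _ => mul_le_mul_of_nonneg_left (h k) (hM j k)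

lemma mulVec_nonneg (M : Matrix (Fin J) (Fin J) ℝ) (hM : ∀ i j, 0 ≤ M i j)
    {a : Fin J → ℝ} (h : ∀ j, 0 ≤ a j) : ∀ j, 0 ≤ M.mulVec a j := by
  intro j
  simp only [Matrix.mulVec, dotProduct]
  exact Finset.sum_nonneg fun k _ => mul_nonneg (hM j k) (h k)

lemma le_zero_of_le_mulVec (M : Matrix (Fin J) (Fin J) ℝ) (hM : ∀ i j, 0 ≤ M i j)
    (hsmall : ∀ δ : ℝ, 0 < δ → ∃ N, ∀ i j, |(M ^ N) i j| ≤ δ)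
    (v : Fin J → ℝ) (hv : ∀ j, v j ≤ M.mulVec v j) : ∀ j, v j ≤ 0 := by
  set p : Fin J → ℝ := fun j => max (v j) 0 with hp_def
  have hp0 : ∀ j, 0 ≤ p j := fun j => le_max_right _ _
  have hvp : ∀ j, v j ≤ p j := fun j => le_max_left _ _
  have hp : ∀ j, p j ≤ M.mulVec p j := by
    intro j
    exact max_le ((hv j).trans (mulVec_mono M hM hvp j)) (mulVec_nonneg M hM hp0 j)
  have hiter : ∀ n j, p j ≤ (M ^ n).mulVec p j := by
    intro n
    induction n with
    | zero => intro j; simp [Matrix.one_mulVec]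
    | succ n ih =>
      intro j
      have h1 : p j ≤ M.mulVec ((M ^ n).mulVec p) j :=
        (hp j).trans (mulVec_mono M hM ih j)
      rwa [Matrix.mulVec_mulVec, ← pow_succ'] at h1
  have hfinal : ∀ j, p j ≤ 0 := by
    intro j
    by_contra hcon
    push_neg at hcon
    set S : ℝ := ∑ i, p i with hS_def
    have hS0 : 0 ≤ S := Finset.sum_nonneg fun i _ => hp0 i
    have hδ : 0 < p j / (S + 1) := by positivity
    obtain ⟨N, hN⟩ := hsmall _ hδ
    have h2 : p j ≤ (p j / (S + 1)) * S := by
      calc p j ≤ (M ^ N).mulVec p j := hiter N j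
        _ = ∑ i, (M ^ N) j i * p i := rfl
        _ ≤ ∑ i, (p j / (S + 1)) * p i := by
            refine Finset.sum_le_sum fun i _ => ?_
            exact mul_le_mul_of_nonneg_right ((le_abs_self _).trans (hN j i)) (hp0 i)
        _ = (p j / (S + 1)) * S := by rw [← Finset.mul_sum]
    have h3 : (p j / (S + 1)) * S < p j := by
      rw [div_mul_eq_mul_div, div_lt_iff₀ (by linarith)]
      nlinarith
    linarith
  exact fun j => (hvp j).trans (hfinal j)

lemma le_solution (M : Matrix (Fin J) (Fin J) ℝ) (hM : ∀ i j, 0 ≤ M i j)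
    (hsmall : ∀ δ : ℝ, 0 < δ → ∃ N, ∀ i j, |(M ^ N) i j| ≤ δ)
    (v r b : Fin J → ℝ) (hv : ∀ j, v j ≤ M.mulVec v j + b j)
    (hr : ∀ j, r j = M.mulVec r j + b j) : ∀ j, v j ≤ r j := by
  have key : ∀ j, (v - r) j ≤ M.mulVec (v - r) j := by
    intro j
    have := Matrix.mulVec_sub M v r
    have h1 : M.mulVec (v - r) j = M.mulVec v j - M.mulVec r j := by
      rw [this]; rfl
    have h2 := hv j
    have h3 := hr j
    simp only [Pi.sub_apply, h1]
    linarith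
  have := le_zero_of_le_mulVec M hM hsmall (v - r) key
  intro j
  have := this j
  simp only [Pi.sub_apply] at this
  linarith

lemma det_one_sub_ne_zero (M : Matrix (Fin J) (Fin J) ℝ) (hM : ∀ i j, 0 ≤ M i j)
    (hsmall : ∀ δ : ℝ, 0 < δ → ∃ N, ∀ i j, |(M ^ N) i j| ≤ δ) :
    (1 - M).det ≠ 0 := by
  intro h
  obtain ⟨v, hv0, hv⟩ := Matrix.exists_mulVec_eq_zero_iff.mpr h
  have heq : ∀ j, v j = M.mulVec v j := by
    intro j
    have h1 : (1 - M).mulVec v j = 0 := by rw [hv]; rfl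
    rw [Matrix.sub_mulVec, Matrix.one_mulVec] at h1
    have : v j - M.mulVec v j = 0 := h1
    linarith
  have hneg : ∀ j, (-v) j ≤ M.mulVec (-v) j := by
    intro j
    rw [Matrix.mulVec_neg]
    simp only [Pi.neg_apply]
    linarith [heq j]
  have h1 := le_zero_of_le_mulVec M hM hsmall v (fun j => (heq j).le)
  have h2 := le_zero_of_le_mulVec M hM hsmall (-v) hneg
  apply hv0
  funext j
  have := h2 j
  simp only [Pi.neg_apply] at this
  have := h1 j
  have : v j = 0 := by linarith [h1 j, h2 j]
  exact this

section FTC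

lemma tendsto_quotient_seq {f : ℝ → ℝ} {t d : ℝ} (hd : HasDerivAt f d t) :
    Tendsto (fun n : ℕ => (f (t + 1 / ((n : ℝ) + 1)) - f t) * ((n : ℝ) + 1)) atTop (𝓝 d) := by
  have hslope := hasDerivAt_iff_tendsto_slope_zero.mp hd
  have hseq : Tendsto (fun n : ℕ => 1 / ((n : ℝ) + 1)) atTop (𝓝[≠] (0 : ℝ)) := by
    apply tendsto_nhdsWithin_of_tendsto_nhds_of_eventually_within
    · exact tendsto_one_div_add_atTop_nhds_zero_nat
    · filter_upwards with n
      have : (0 : ℝ) < 1 / ((n : ℝ) + 1) := by positivity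
      exact ne_of_gt this
  have := hslope.comp hseq
  convert this using 2 with n
  have hpos : ((n : ℝ) + 1) ≠ 0 := by positivity
  simp only [Function.comp, smul_eq_mul, one_div, inv_inv]
  ring

lemma lipschitz_quotient_bound {f : ℝ → ℝ} {L : NNReal} (hf : LipschitzWith L f)
    (t : ℝ) (n : ℕ) : |(f (t + 1 / ((n : ℝ) + 1)) - f t) * ((n : ℝ) + 1)| ≤ (L : ℝ) := by
  have hpos : (0 : ℝ) < (n : ℝ) + 1 := by positivity
  have hh : (0:ℝ) < 1 / ((n : ℝ) + 1) := by positivity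
  have h1 : |f (t + 1 / ((n : ℝ) + 1)) - f t| ≤ (L : ℝ) * (1 / ((n : ℝ) + 1)) := by
    calc |f (t + 1 / ((n : ℝ) + 1)) - f t| = dist (f (t + 1 / ((n : ℝ) + 1))) (f t) :=
          (Real.dist_eq _ _).symm
      _ ≤ (L : ℝ) * dist (t + 1 / ((n : ℝ) + 1)) t := hf.dist_le_mul _ _
      _ = (L : ℝ) * (1 / ((n : ℝ) + 1)) := by
          congr 1
          rw [Real.dist_eq]
          have : t + 1 / ((n : ℝ) + 1) - t = 1 / ((n : ℝ) + 1) := by ring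
          rw [this, abs_of_pos hh]
  rw [abs_mul, abs_of_pos hpos]
  calc |f (t + 1 / ((n : ℝ) + 1)) - f t| * ((n : ℝ) + 1)
      ≤ ((L : ℝ) * (1 / ((n : ℝ) + 1))) * ((n : ℝ) + 1) :=
        mul_le_mul_of_nonneg_right h1 hpos.le
    _ = (L : ℝ) := by field_simp

lemma lipschitz_ftc {f : ℝ → ℝ} {L : NNReal} (hf : LipschitzWith L f) (a b : ℝ) :
    f b - f a = ∫ t in a..b, deriv f t := by
  have hcont : Continuous f := hf.continuous
  have hint : ∀ u v : ℝ, IntervalIntegrable f volume u v := fun u v =>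
    hcont.intervalIntegrable u v
  set φ : ℕ → ℝ → ℝ := fun n t => (f (t + 1 / ((n : ℝ) + 1)) - f t) * ((n : ℝ) + 1) with hφ
  have hlim : Tendsto (fun n => ∫ t in a..b, φ n t) atTop (𝓝 (∫ t in a..b, deriv f t)) := by
    apply intervalIntegral.tendsto_integral_filter_of_dominated_convergence
      (bound := fun _ => (L : ℝ))
    · filter_upwards with n
      exact (((hcont.comp (continuous_id.add continuous_const)).sub hcont).mul
        continuous_const).aestronglyMeasurable
    · filter_upwards with n
      filter_upwards with t _
      exact lipschitz_quotient_bound hf t n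
    · exact intervalIntegrable_const
    · filter_upwards [hf.ae_differentiableAt] with t ht _
      exact tendsto_quotient_seq ht.hasDerivAt
  have hcomp : ∀ n : ℕ, ∫ t in a..b, φ n t =
      ((∫ t in b..(b + 1 / ((n : ℝ) + 1)), f t) - ∫ t in a..(a + 1 / ((n : ℝ) + 1)), f t)
        * ((n : ℝ) + 1) := by
    intro n
    set h : ℝ := 1 / ((n : ℝ) + 1) with hh
    have e1 : ∫ t in a..b, φ n t = ((∫ t in a..b, f (t + h)) - ∫ t in a..b, f t) * ((n:ℝ)+1) := by
      rw [hφ]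
      simp only
      rw [intervalIntegral.integral_mul_const]
      congr 1
      apply intervalIntegral.integral_sub
      · exact (hcont.comp (continuous_id.add continuous_const)).intervalIntegrable a b
      · exact hint a b
    have e2 : (∫ t in a..b, f (t + h)) = ∫ t in (a+h)..(b+h), f t :=
      intervalIntegral.integral_comp_add_right f h
    have e3 : (∫ t in (a+h)..(b+h), f t) - (∫ t in a..b, f t)
        = (∫ t in b..(b+h), f t) - ∫ t in a..(a+h), f t := by
      have h4 : (∫ t in a..(a+h), f t) + (∫ t in (a+h)..(b+h), f t) = ∫ t in a..(b+h), f t :=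
        intervalIntegral.integral_add_adjacent_intervals (hint _ _) (hint _ _)
      have h5 : (∫ t in a..b, f t) + (∫ t in b..(b+h), f t) = ∫ t in a..(b+h), f t :=
        intervalIntegral.integral_add_adjacent_intervals (hint _ _) (hint _ _)
      linarith
    rw [e1, e2, e3]
  have hlim2 : ∀ u : ℝ, Tendsto (fun n : ℕ =>
      (∫ t in u..(u + 1 / ((n : ℝ) + 1)), f t) * ((n : ℝ) + 1)) atTop (𝓝 (f u)) := by
    intro u
    have hder : HasDerivAt (fun v => ∫ t in u..v, f t) (f u) u :=
      intervalIntegral.integral_hasDerivAt_right (hint u u)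
        (hcont.stronglyMeasurable.stronglyMeasurableAtFilter) hcont.continuousAt
    have := tendsto_quotient_seq hder
    simpa using this
  have hlim3 : Tendsto (fun n => ∫ t in a..b, φ n t) atTop (𝓝 (f b - f a)) := by
    have := (hlim2 b).sub (hlim2 a)
    apply Tendsto.congr' _ this
    filter_upwards with n
    rw [hcomp n]
    ring
  exact tendsto_nhds_unique hlim3 hlim

lemma deriv_le_of_lipschitz {f : ℝ → ℝ} {L : NNReal} (hf : LipschitzWith L f) (t : ℝ) :
    |deriv f t| ≤ (L : ℝ) := by
  by_cases hd : DifferentiableAt ℝ f t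
  · have h2 := tendsto_quotient_seq hd.hasDerivAt
    have h4 : Tendsto (fun n : ℕ => |(f (t + 1 / ((n : ℝ) + 1)) - f t) * ((n : ℝ) + 1)|)
        atTop (𝓝 |deriv f t|) := h2.abs
    exact le_of_tendsto h4 (Eventually.of_forall fun n => lipschitz_quotient_bound hf t n)
  · rw [deriv_zero_of_not_differentiableAt hd]
    simp

lemma lipschitz_decay {f : ℝ → ℝ} {L : NNReal} (hf : LipschitzWith L f) {a b c : ℝ}
    (hab : a ≤ b) (h_ae : ∀ᵐ t ∂(volume : Measure ℝ), t ∈ Set.Ioc a b → deriv f t ≤ c) :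
    f b - f a ≤ c * (b - a) := by
  rw [lipschitz_ftc hf a b]
  have hder_int : IntervalIntegrable (deriv f) volume a b := by
    refine ⟨?_, ?_⟩ <;>
    · apply MeasureTheory.Integrable.mono' (g := fun _ => (L : ℝ))
        (integrable_const _)
        ((measurable_deriv f).aestronglyMeasurable)
      filter_upwards with t
      exact deriv_le_of_lipschitz hf t
  have hIcc : ∀ᵐ t ∂(volume : Measure ℝ), t ∈ Set.Icc a b → deriv f t ≤ c := by
    have hsing : ∀ᵐ t ∂(volume : Measure ℝ), t ≠ a := by
      have : (volume : Measure ℝ) {a} = 0 := measure_singleton a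
      exact (ae_iff.mpr (by simpa using this))
    filter_upwards [h_ae, hsing] with t h1 h2 h3
    exact h1 ⟨lt_of_le_of_ne h3.1 (Ne.symm h2), h3.2⟩
  calc (∫ t in a..b, deriv f t) ≤ ∫ t in a..b, c := by
        apply intervalIntegral.integral_mono_ae_restrict hab hder_int intervalIntegrable_const
        rw [Filter.EventuallyLE, MeasureTheory.ae_restrict_iff' measurableSet_Icc]
        exact hIcc
    _ = c * (b - a) := by simp [mul_comm]

end FTC

lemma lipschitzWith_of_le {f : ℝ → ℝ} {C : ℝ} (hC : 0 ≤ C)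
    (h : ∀ s t : ℝ, s ≤ t → |f t - f s| ≤ C * (t - s)) :
    LipschitzWith C.toNNReal f := by
  apply LipschitzWith.of_dist_le_mul
  intro a b
  rw [Real.dist_eq, Real.dist_eq, Real.coe_toNNReal _ hC]
  rcases le_total b a with hab | hab
  · have := h b a hab
    rw [abs_sub_comm] at this
    calc |f a - f b| ≤ C * (a - b) := by rwa [abs_sub_comm] at this
      _ ≤ C * |a - b| := mul_le_mul_of_nonneg_left (le_abs_self _) hC
  · calc |f a - f b| = |f b - f a| := abs_sub_comm _ _
      _ ≤ C * (b - a) := h a b hab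
      _ = C * |b - a| := by rw [abs_of_nonneg (by linarith)]
      _ = C * |a - b| := by rw [abs_sub_comm]


/-- Fluid stability of the generalized Jackson network: with linear input
`x(t) = z + (α − (I − Pᵀ)μ) t` and traffic intensities `ρ_j = λ_j/μ_j < 1`,
the fluid queue length `q` drains to zero by time
`wᵀz / min_j μ_j (1 − ρ_j)`, where `w = (I − P)⁻¹ e`. -/
theorem fluid_model_drains {J : ℕ} (hJ : 0 < J)
    (P : Matrix (Fin J) (Fin J) ℝ) (hP : IsSubstochasticSpecLtOne P)
    (z α μ : Fin J → ℝ) (hz : ∀ j, 0 ≤ z j) (hα : ∀ j, 0 ≤ α j)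
    (hμ : ∀ j, 0 < μ j)
    (lam : Fin J → ℝ) (hlam : lam = ((1 - P.transpose)⁻¹).mulVec α)
    (hρ : ∀ j, lam j / μ j < 1)
    (w : Fin J → ℝ) (hw : w = ((1 - P)⁻¹).mulVec (fun _ => 1))
    (x : ℝ → Fin J → ℝ)
    (hx : ∀ t : ℝ, x t = fun j => z j + (α j - ((1 - P.transpose).mulVec μ) j) * t)
    (y q : ℝ → Fin J → ℝ) (hsol : IsSkorohodSolution P x y q) :
    ∀ t : ℝ, (dotProduct w z) / (⨅ j, μ j * (1 - lam j / μ j)) ≤ t →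
      q t = 0 := by
  obtain ⟨hPnn, hProw, hPspec⟩ := hP
  obtain ⟨hq_eq, hq_nn, hy0, hy_mono, hy_rc, hFex⟩ := hsol
  haveI : Nonempty (Fin J) := Fin.pos_iff_nonempty.mp hJ
  choose F hFy hFint using hFex
  -- matrix basics
  have hsmallP : ∀ δ : ℝ, 0 < δ → ∃ N, ∀ i j, |(P ^ N) i j| ≤ δ :=
    FluidAux.pow_small hJ P hPspec
  have hPTnn : ∀ i j, 0 ≤ P.transpose i j := fun i j => hPnn j i
  have hsmallPT : ∀ δ : ℝ, 0 < δ → ∃ N, ∀ i j, |(P.transpose ^ N) i j| ≤ δ := by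
    intro δ hδ
    obtain ⟨N, hN⟩ := hsmallP δ hδ
    refine ⟨N, fun i j => ?_⟩
    rw [← Matrix.transpose_pow]
    exact hN j i
  have hdet : (1 - P).det ≠ 0 := det_one_sub_ne_zero P hPnn hsmallP
  have hdetT : (1 - P.transpose).det ≠ 0 :=
    det_one_sub_ne_zero _ hPTnn hsmallPT
  have hW : (1 - P).mulVec w = (fun _ => 1) := by
    rw [hw, Matrix.mulVec_mulVec, Matrix.mul_nonsing_inv _ hdet.isUnit, Matrix.one_mulVec]
  have hLam : (1 - P.transpose).mulVec lam = α := by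
    rw [hlam, Matrix.mulVec_mulVec, Matrix.mul_nonsing_inv _ hdetT.isUnit, Matrix.one_mulVec]
  -- expansion of (1 - Mᵀ) mulVec
  have hmv : ∀ (M : Matrix (Fin J) (Fin J) ℝ) (v : Fin J → ℝ) (j : Fin J),
      (1 - M).mulVec v j = v j - M.mulVec v j := by
    intro M v j
    rw [Matrix.sub_mulVec, Matrix.one_mulVec]
    rfl
  have hw_eq : ∀ j, w j = 1 + P.mulVec w j := by
    intro j
    have := congrFun hW j
    rw [hmv] at this
    linarith
  have hw_nn : ∀ j, 0 ≤ w j := by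
    have := le_solution P hPnn hsmallP 0 w (fun _ => 1)
      (fun j => by simp [Matrix.mulVec_zero]) (fun j => by rw [hw_eq j]; ring)
    intro j; simpa using this j
  have hw_ge1 : ∀ j, 1 ≤ w j := by
    intro j
    rw [hw_eq j]
    have := mulVec_nonneg P hPnn hw_nn j
    linarith
  have hlam_eq : ∀ j, lam j = α j + P.transpose.mulVec lam j := by
    intro j
    have := congrFun hLam j
    rw [hmv] at this
    linarith
  have hlam_nn : ∀ j, 0 ≤ lam j := by
    have := le_solution P.transpose hPTnn hsmallPT 0 lam α
      (fun j => by simpa [Matrix.mulVec_zero] using hα j) (fun j => by rw [hlam_eq j]; ring)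
    intro j; simpa using this j
  -- the auxiliary vector h = (1 - Pᵀ)⁻¹ 1
  set hv : Fin J → ℝ := ((1 - P.transpose)⁻¹).mulVec (fun _ => 1) with hhv
  have hHv : (1 - P.transpose).mulVec hv = (fun _ => 1) := by
    rw [hhv, Matrix.mulVec_mulVec, Matrix.mul_nonsing_inv _ hdetT.isUnit, Matrix.one_mulVec]
  have hhv_eq : ∀ j, hv j = 1 + P.transpose.mulVec hv j := by
    intro j
    have := congrFun hHv j
    rw [hmv] at this
    linarith
  have hhv_nn : ∀ j, 0 ≤ hv j := by
    have := le_solution P.transpose hPTnn hsmallPT 0 hv (fun _ => 1)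
      (fun j => by simp [Matrix.mulVec_zero]) (fun j => by rw [hhv_eq j]; ring)
    intro j; simpa using this j
  -- epsilon
  set ε : ℝ := ⨅ j, μ j * (1 - lam j / μ j) with hε_def
  have hε_eq : ε = ⨅ j, (μ j - lam j) := by
    rw [hε_def]
    congr 1
    funext j
    rw [mul_sub, mul_one, mul_div_cancel₀ _ (hμ j).ne']
  have hε_le : ∀ j, ε ≤ μ j - lam j := by
    intro j
    rw [hε_eq]
    exact ciInf_le (Set.Finite.bddBelow (Set.finite_range _)) j
  have hε_pos : 0 < ε := by
    rw [hε_eq]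
    obtain ⟨j, hj⟩ := exists_eq_ciInf_of_finite (f := fun j => μ j - lam j)
    rw [← hj]
    have h1 := hρ j
    have h2 := hμ j
    rw [div_lt_one h2] at h1
    linarith
  -- basic positivity of y
  have hy_nn : ∀ t : ℝ, 0 ≤ t → ∀ j, 0 ≤ y t j := by
    intro t ht j
    have h := hy_mono j (Set.mem_Ici.mpr le_rfl) (Set.mem_Ici.mpr ht) ht
    simpa [hy0] using h
  set drift : Fin J → ℝ := fun j => α j - (1 - P.transpose).mulVec μ j with hdrift_def
  have hxs : ∀ (s : ℝ) (j : Fin J), x s j = z j + drift j * s := by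
    intro s j; rw [hx s]
  set K : ℝ := ∑ j, |drift j| with hK_def
  have hK_nn : 0 ≤ K := Finset.sum_nonneg fun j _ => abs_nonneg _
  have hdriftK : ∀ j, |drift j| ≤ K :=
    fun j => Finset.single_le_sum (f := fun j => |drift j|)
      (fun _ _ => abs_nonneg _) (Finset.mem_univ j)
  have hmv2 : ∀ (M : Matrix (Fin J) (Fin J) ℝ) (v : Fin J → ℝ) (j : Fin J),
      M.mulVec v j = ∑ k, M j k * v k := by
    intro M v j; rfl
  have hFyy : ∀ (k : Fin J) (s : ℝ), 0 ≤ s → F k s = y s k := by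
    intro k s hs
    rw [hFy k s, max_eq_left hs]
  -- null sets for the Stieltjes measures
  have hnull : ∀ (j : Fin J) (t : ℝ), 0 ≤ t → ∀ A : Set ℝ, MeasurableSet A →
      A ⊆ Set.Icc 0 t → (∀ s ∈ A, q s j ≠ 0) → (F j).measure A = 0 := by
    intro j t ht A hA hAsub hAq
    set μ' := (F j).measure.restrict (Set.Icc 0 t) with hμ'
    haveI : IsFiniteMeasure μ' := by
      constructor
      rw [hμ', Measure.restrict_apply_univ]
      exact isCompact_Icc.measure_lt_top
    set G : ℝ → ℝ := fun s => x s j + (F j s - ∑ k, P k j * F k s) with hG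
    have hGmeas : Measurable G := by
      apply Measurable.add
      · have : (fun s => x s j) = fun s => z j + drift j * s := by
          funext s; exact hxs s j
        rw [this]
        exact (measurable_const.add (measurable_id.const_mul _))
      · exact ((F j).mono.measurable).sub
          (Finset.measurable_sum _ fun k _ => ((F k).mono.measurable).const_mul _)
    have hqG : ∀ s, s ∈ Set.Icc (0:ℝ) t → q s j = G s := by
      intro s hs
      rw [hq_eq s hs.1, hG]
      simp only [Pi.add_apply]
      congr 1
      rw [hmv P.transpose (y s) j, hmv2]
      congr 1
      · exact (hFyy j s hs.1).symm
      · apply Finset.sum_congr rfl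
        intro k _
        rw [Matrix.transpose_apply, hFyy k s hs.1]
    have haeq : (fun s => q s j) =ᵐ[μ'] G := by
      rw [hμ', Filter.EventuallyEq]
      rw [MeasureTheory.ae_restrict_iff' measurableSet_Icc]
      exact MeasureTheory.ae_of_all _ hqG
    have hmeas : AEStronglyMeasurable (fun s => q s j) μ' :=
      (hGmeas.aestronglyMeasurable).congr haeq.symm
    set C : ℝ := |z j| + |drift j| * t + F j t with hC
    have hbound : ∀ᵐ s ∂μ', ‖q s j‖ ≤ C := by
      rw [hμ', MeasureTheory.ae_restrict_iff' measurableSet_Icc]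
      apply MeasureTheory.ae_of_all
      intro s hs
      have hq0 := hq_nn s hs.1 j
      rw [Real.norm_eq_abs, abs_of_nonneg hq0]
      have hqs : q s j = x s j + (y s j - P.transpose.mulVec (y s) j) := by
        rw [hq_eq s hs.1]
        simp only [Pi.add_apply]
        rw [hmv P.transpose (y s) j]
      have h1 : 0 ≤ P.transpose.mulVec (y s) j :=
        mulVec_nonneg P.transpose hPTnn (hy_nn s hs.1) j
      have h2 : y s j ≤ y t j :=
        hy_mono j (Set.mem_Ici.mpr hs.1) (Set.mem_Ici.mpr ht) hs.2
      have h3 : x s j ≤ |z j| + |drift j| * t := by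
        rw [hxs s j]
        have : drift j * s ≤ |drift j| * t := by
          calc drift j * s ≤ |drift j| * s :=
                mul_le_mul_of_nonneg_right (le_abs_self _) hs.1
            _ ≤ |drift j| * t := mul_le_mul_of_nonneg_left hs.2 (abs_nonneg _)
        linarith [le_abs_self (z j)]
      have h4 : F j t = y t j := hFyy j t ht
      rw [hC]
      linarith
    have hint : MeasureTheory.Integrable (fun s => q s j) μ' :=
      MeasureTheory.Integrable.mono' (MeasureTheory.integrable_const C) hmeas hbound
    have hnonneg : 0 ≤ᵐ[μ'] (fun s => q s j) := by
      rw [hμ', Filter.EventuallyLE, MeasureTheory.ae_restrict_iff' measurableSet_Icc]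
      simp only [Pi.zero_apply]
      exact MeasureTheory.ae_of_all _ (fun s hs => hq_nn s hs.1 j)
    have hzero := (MeasureTheory.integral_eq_zero_iff_of_nonneg_ae hnonneg hint).mp
      (hFint j t ht)
    have hbad : μ' {s | q s j ≠ 0} = 0 := by
      rw [← MeasureTheory.ae_iff]
      filter_upwards [hzero] with s hs
      simpa using hs
    have hsub : A ⊆ {s | q s j ≠ 0} := hAq
    have : μ' A = 0 := measure_mono_null hsub hbad
    rwa [hμ', Measure.restrict_apply hA, Set.inter_eq_self_of_subset_left hAsub] at this
  -- flatness of y on intervals where q is positive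
  have hflat : ∀ (j : Fin J) (u v : ℝ), 0 ≤ u → u ≤ v →
      (∀ s ∈ Set.Ioc u v, 0 < q s j) → y v j = y u j := by
    intro j u v hu huv hqpos
    have h0 := hnull j v (hu.trans huv) (Set.Ioc u v) measurableSet_Ioc
      (fun s hs => ⟨hu.trans hs.1.le, hs.2⟩) (fun s hs => (hqpos s hs).ne')
    rw [StieltjesFunction.measure_Ioc, ENNReal.ofReal_eq_zero] at h0
    rw [hFyy j v (hu.trans huv), hFyy j u hu] at h0
    have hmono := hy_mono j (Set.mem_Ici.mpr hu) (Set.mem_Ici.mpr (hu.trans huv)) huv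
    have : y u j ≤ y v j := hmono
    linarith
  -- point selection: where y increases there is a time with q = 0 and y close to final value
  have hexr : ∀ (j : Fin J) (s t δ : ℝ), 0 ≤ s → s ≤ t → y s j < y t j → 0 < δ →
      ∃ r, r ∈ Set.Ioc s t ∧ q r j = 0 ∧ y t j - δ ≤ y r j := by
    intro j s t δ hs hst hyst hδ
    have ht0 : (0:ℝ) ≤ t := hs.trans hst
    set S : Set ℝ := {r | r ∈ Set.Icc s t ∧ y t j ≤ y r j} with hS
    have htS : t ∈ S := ⟨⟨hst, le_rfl⟩, le_rfl⟩
    have hSbdd : BddBelow S := ⟨s, fun r hr => hr.1.1⟩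
    set r₀ : ℝ := sInf S with hr₀
    have hr₀_lb : s ≤ r₀ := le_csInf ⟨t, htS⟩ (fun r hr => hr.1.1)
    have hr₀_le : r₀ ≤ t := csInf_le hSbdd htS
    have hr₀0 : 0 ≤ r₀ := hs.trans hr₀_lb
    have hy_le : y r₀ j ≤ y t j :=
      hy_mono j (Set.mem_Ici.mpr hr₀0) (Set.mem_Ici.mpr ht0) hr₀_le
    have hy_ge : y t j ≤ y r₀ j := by
      by_contra hcon
      push_neg at hcon
      have hcont := hy_rc j r₀ hr₀0
      have hev : ∀ᶠ u in 𝓝[Set.Ici r₀] r₀, y u j < y t j :=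
        hcont.eventually (eventually_lt_nhds hcon)
      obtain ⟨u', hu', hIco⟩ := mem_nhdsGE_iff_exists_Ico_subset.mp hev
      obtain ⟨r', hr'S, hr'lt⟩ := exists_lt_of_csInf_lt ⟨t, htS⟩
        (show sInf S < u' from lt_of_le_of_lt (le_refl _) (by rw [← hr₀]; exact hu'))
      have h1 : r₀ ≤ r' := csInf_le hSbdd hr'S
      have h2 : y r' j < y t j := hIco ⟨h1, hr'lt⟩
      exact absurd hr'S.2 (not_le.mpr h2)
    have hyr₀ : y r₀ j = y t j := le_antisymm hy_le hy_ge
    have hs_lt : s < r₀ := by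
      rcases eq_or_lt_of_le hr₀_lb with heq | hlt
      · exfalso; rw [← heq] at hyr₀; linarith
      · exact hlt
    by_cases hatom : (F j).measure {r₀} = 0
    · -- no atom at r₀
      have hFr₀ : F j r₀ = y t j := by rw [hFyy j r₀ hr₀0, hyr₀]
      have hll : Function.leftLim (F j) r₀ = y t j := by
        rw [StieltjesFunction.measure_singleton, ENNReal.ofReal_eq_zero] at hatom
        have h2 : Function.leftLim (F j) r₀ ≤ F j r₀ := (F j).mono.leftLim_le le_rfl
        linarith
      have htd : Tendsto (F j) (𝓝[<] r₀) (𝓝 (y t j)) := by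
        rw [← hll]; exact (F j).mono.tendsto_leftLim r₀
      have hev1 : ∀ᶠ u in 𝓝[<] r₀, y t j - δ < F j u :=
        htd.eventually (eventually_gt_nhds (by linarith))
      have hev2 : Set.Ioo s r₀ ∈ 𝓝[<] r₀ :=
        Ioo_mem_nhdsLT_of_mem (Set.mem_Ioc.mpr ⟨hs_lt, le_rfl⟩)
      obtain ⟨u, hu1, hu2⟩ := (hev1.and hev2).exists
      have hu0 : (0:ℝ) ≤ u := hs.trans hu2.1.le
      have huF : F j u < y t j := by
        have hnotS : u ∉ S := fun hmem => absurd (csInf_le hSbdd hmem) (not_le.mpr hu2.2)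
        have h3 : ¬ y t j ≤ y u j := fun h =>
          hnotS ⟨⟨hu2.1.le, (hu2.2.le.trans hr₀_le)⟩, h⟩
        rw [hFyy j u hu0]
        linarith [not_le.mp h3]
      have hpos : (F j).measure (Set.Ioc u r₀) ≠ 0 := by
        rw [StieltjesFunction.measure_Ioc, Ne, ENNReal.ofReal_eq_zero, not_le, hFr₀]
        linarith
      have hIoc_sub : Set.Ioc u r₀ ⊆ Set.Icc 0 t :=
        fun v hv' => ⟨hu0.trans hv'.1.le, hv'.2.trans hr₀_le⟩
      have hnot : ¬ ∀ r ∈ Set.Ioc u r₀, q r j ≠ 0 := fun hall =>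
        hpos (hnull j t ht0 _ measurableSet_Ioc hIoc_sub hall)
      push_neg at hnot
      obtain ⟨r, hrm, hq0⟩ := hnot
      refine ⟨r, ⟨hu2.1.trans hrm.1, hrm.2.trans hr₀_le⟩, hq0, ?_⟩
      have h4 : y u j ≤ y r j :=
        hy_mono j (Set.mem_Ici.mpr hu0) (Set.mem_Ici.mpr (hu0.trans hrm.1.le)) hrm.1.le
      rw [hFyy j u hu0] at hu1
      linarith
    · -- atom at r₀
      have hq0 : q r₀ j = 0 := by
        by_contra hne
        exact hatom (hnull j t ht0 {r₀} (measurableSet_singleton _)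
          (fun v hv' => by rw [Set.mem_singleton_iff] at hv'; exact hv' ▸ ⟨hr₀0, hr₀_le⟩)
          (fun v hv' => by rw [Set.mem_singleton_iff] at hv'; exact hv' ▸ hne))
      exact ⟨r₀, ⟨hs_lt, hr₀_le⟩, hq0, by rw [hyr₀]; linarith⟩
  -- the key increment inequality
  have hlip : ∀ (s t : ℝ), 0 ≤ s → s ≤ t → ∀ j,
      y t j - y s j ≤ P.transpose.mulVec (fun k => y t k - y s k) j + K * (t - s) := by
    intro s t hs hst j
    have ht0 : (0:ℝ) ≤ t := hs.trans hst
    have hvnn : ∀ k, 0 ≤ y t k - y s k := fun k =>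
      sub_nonneg.mpr (hy_mono k (Set.mem_Ici.mpr hs) (Set.mem_Ici.mpr ht0) hst)
    apply le_of_forall_pos_le_add
    intro δ hδ
    rcases eq_or_lt_of_le (hy_mono j (Set.mem_Ici.mpr hs) (Set.mem_Ici.mpr ht0) hst)
      with heq | hlt
    · have h1 : 0 ≤ P.transpose.mulVec (fun k => y t k - y s k) j :=
        mulVec_nonneg _ hPTnn hvnn j
      have h2 : 0 ≤ K * (t - s) := mul_nonneg hK_nn (by linarith)
      simp only at heq
      linarith
    · obtain ⟨r, hrIoc, hqr, hyr⟩ := hexr j s t δ hs hst hlt hδ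
      have hr0 : (0:ℝ) ≤ r := hs.trans hrIoc.1.le
      have h0 : 0 = x r j + (y r j - P.transpose.mulVec (y r) j) := by
        rw [← hqr, hq_eq r hr0]
        simp only [Pi.add_apply]
        rw [hmv P.transpose (y r) j]
      have hyrt : ∀ k, y r k ≤ y t k := fun k =>
        hy_mono k (Set.mem_Ici.mpr hr0) (Set.mem_Ici.mpr ht0) hrIoc.2
      have hm1 : P.transpose.mulVec (y r) j ≤ P.transpose.mulVec (y t) j :=
        mulVec_mono _ hPTnn hyrt j
      have hqs : 0 ≤ x s j + (y s j - P.transpose.mulVec (y s) j) := by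
        have := hq_nn s hs j
        rw [hq_eq s hs] at this
        simp only [Pi.add_apply] at this
        rw [hmv P.transpose (y s) j] at this
        exact this
      have hsub : P.transpose.mulVec (fun k => y t k - y s k) j
          = P.transpose.mulVec (y t) j - P.transpose.mulVec (y s) j := by
        rw [hmv2, hmv2, hmv2, ← Finset.sum_sub_distrib]
        apply Finset.sum_congr rfl
        intro k _
        ring
      have hx1 : x s j - x r j ≤ K * (t - s) := by
        rw [hxs s j, hxs r j]
        have h5 : z j + drift j * s - (z j + drift j * r) = -(drift j * (r - s)) := by ring
        rw [h5]
        have h6 : -(drift j * (r - s)) ≤ |drift j| * (r - s) := by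
          have := neg_abs_le (drift j)
          nlinarith [hrIoc.1.le, sub_nonneg.mpr hrIoc.1.le]
        calc -(drift j * (r - s)) ≤ |drift j| * (r - s) := h6
          _ ≤ K * (t - s) := by
              apply mul_le_mul (hdriftK j) (by linarith [hrIoc.2]) (by linarith [hrIoc.1]) hK_nn
      rw [hsub]
      linarith
  -- y is Lipschitz with constant K * hv j
  have hylip : ∀ (j : Fin J) (s t : ℝ), 0 ≤ s → s ≤ t →
      y t j - y s j ≤ K * hv j * (t - s) := by
    intro j s t hs hst
    have := le_solution P.transpose hPTnn hsmallPT
      (fun k => y t k - y s k) (fun k => K * (t - s) * hv k) (fun _ => K * (t - s))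
      (fun k => hlip s t hs hst k)
      (fun k => by
        have h1 := hhv_eq k
        have h2 : P.transpose.mulVec (fun k' => K * (t - s) * hv k') k
            = K * (t - s) * P.transpose.mulVec hv k := by
          rw [hmv2, hmv2, Finset.mul_sum]
          apply Finset.sum_congr rfl
          intro k' _
          ring
        show K * (t - s) * hv k
            = P.transpose.mulVec (fun k' => K * (t - s) * hv k') k + K * (t - s)
        rw [h2, h1]
        ring)
    have h9 := this j
    have h10 : K * (t - s) * hv j = K * hv j * (t - s) := by ring
    linarith
  have hFlip : ∀ j : Fin J, LipschitzWith (Real.toNNReal (K * hv j)) (F j) := by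
    intro j
    apply lipschitzWith_of_le (mul_nonneg hK_nn (hhv_nn j))
    intro s t hst
    have h1 : max s 0 ≤ max t 0 := max_le_max hst le_rfl
    have h2 : max t 0 - max s 0 ≤ t - s := by
      rcases le_total s 0 with hs0 | hs0
      · rcases le_total t 0 with ht0 | ht0
        · rw [max_eq_right hs0, max_eq_right ht0]; linarith
        · rw [max_eq_right hs0, max_eq_left ht0]; linarith
      · rw [max_eq_left hs0, max_eq_left (hs0.trans hst)]
    have h3 : F j t - F j s = y (max t 0) j - y (max s 0) j := by rw [hFy, hFy]
    have h4 : 0 ≤ F j t - F j s := sub_nonneg.mpr ((F j).mono hst)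
    rw [abs_of_nonneg h4, h3]
    calc y (max t 0) j - y (max s 0) j ≤ K * hv j * (max t 0 - max s 0) :=
          hylip j _ _ (le_max_right s 0) h1
      _ ≤ K * hv j * (t - s) :=
          mul_le_mul_of_nonneg_left h2 (mul_nonneg hK_nn (hhv_nn j))
  -- the queue-length in terms of the Stieltjes extensions
  set Q : Fin J → ℝ → ℝ := fun j s => z j + drift j * s + (F j s - ∑ k, P k j * F k s)
    with hQ_def
  have hQq : ∀ (s : ℝ), 0 ≤ s → ∀ j, Q j s = q s j := by
    intro s hs j
    rw [hq_eq s hs]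
    show z j + drift j * s + (F j s - ∑ k, P k j * F k s)
        = x s j + (1 - P.transpose).mulVec (y s) j
    rw [hmv P.transpose (y s) j, hmv2, hxs s j, hFyy j s hs]
    have hsame : ∑ k, P.transpose j k * y s k = ∑ k, P k j * F k s :=
      Finset.sum_congr rfl fun k _ => by rw [Matrix.transpose_apply, hFyy k s hs]
    rw [← hsame]
  have hQcont : ∀ j, Continuous (Q j) := by
    intro j
    apply Continuous.add
    · exact continuous_const.add (continuous_const.mul continuous_id)
    · exact ((hFlip j).continuous).sub
        (continuous_finset_sum _ fun k _ => (continuous_const.mul ((hFlip k).continuous)))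
  have hdot : ∀ a b : Fin J → ℝ, dotProduct a b = ∑ j, a j * b j := fun a b => rfl
  have hkey : ∀ v : Fin J → ℝ,
      dotProduct w ((1 - P.transpose).mulVec v) = ∑ j, v j := by
    intro v
    rw [Matrix.dotProduct_mulVec]
    have h1 : (1 : Matrix (Fin J) (Fin J) ℝ) - P.transpose = (1 - P).transpose := by
      rw [Matrix.transpose_sub, Matrix.transpose_one]
    rw [h1, Matrix.vecMul_transpose, hW, hdot]
    simp
  set WD : ℝ := dotProduct w drift with hWD_def
  have hWD : WD = (∑ j, lam j) - (∑ j, μ j) := by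
    rw [hWD_def]
    have hdd : drift = fun j => α j - (1 - P.transpose).mulVec μ j := rfl
    have h2 : dotProduct w drift
        = dotProduct w α - dotProduct w ((1 - P.transpose).mulVec μ) := by
      rw [hdot, hdot, hdot, ← Finset.sum_sub_distrib]
      exact Finset.sum_congr rfl fun j _ => by rw [hdd]; ring
    rw [h2, ← hLam, hkey, hkey]
  -- the Lyapunov function
  set f : ℝ → ℝ := fun s => (dotProduct w z + WD * s) + ∑ j, F j s with hf_def
  have hfQ : ∀ s : ℝ, f s = ∑ j, w j * Q j s := by
    intro s
    have h3 : ∀ j, w j * Q j s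
        = w j * (z j + drift j * s) + w j * (F j s - ∑ k, P k j * F k s) := by
      intro j; rw [hQ_def]; ring
    rw [hf_def]
    simp only
    rw [Finset.sum_congr rfl fun j _ => h3 j, Finset.sum_add_distrib]
    have h4 : ∑ j, w j * (F j s - ∑ k, P k j * F k s)
        = dotProduct w ((1 - P.transpose).mulVec (fun k => F k s)) := by
      rw [hdot]
      apply Finset.sum_congr rfl
      intro j _
      rw [hmv P.transpose _ j, hmv2]
      simp only [Matrix.transpose_apply]
    rw [h4, hkey]
    have h5 : ∑ j, w j * (z j + drift j * s)
        = dotProduct w z + WD * s := by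
      rw [hdot, hWD_def, hdot, Finset.sum_mul, ← Finset.sum_add_distrib]
      exact Finset.sum_congr rfl fun j _ => by ring
    rw [h5]
  set Lf : ℝ := |WD| + ∑ j, K * hv j with hLf_def
  have hLf_nn : 0 ≤ Lf :=
    add_nonneg (abs_nonneg _)
      (Finset.sum_nonneg fun j _ => mul_nonneg hK_nn (hhv_nn j))
  have hfLip : LipschitzWith (Real.toNNReal Lf) f := by
    apply lipschitzWith_of_le hLf_nn
    intro s t hst
    have hFd : ∀ j, |F j t - F j s| ≤ K * hv j * (t - s) := by
      intro j
      have h := (hFlip j).dist_le_mul t s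
      rw [Real.dist_eq, Real.dist_eq, Real.coe_toNNReal _ (mul_nonneg hK_nn (hhv_nn j))] at h
      calc |F j t - F j s| ≤ K * hv j * |t - s| := h
        _ = K * hv j * (t - s) := by rw [abs_of_nonneg (by linarith)]
    have h6 : f t - f s = WD * (t - s) + ∑ j, (F j t - F j s) := by
      rw [hf_def]
      simp only
      rw [Finset.sum_sub_distrib]
      ring
    rw [h6]
    calc |WD * (t - s) + ∑ j, (F j t - F j s)|
        ≤ |WD * (t - s)| + |∑ j, (F j t - F j s)| := abs_add_le _ _
      _ ≤ |WD| * (t - s) + ∑ j, K * hv j * (t - s) := by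
          apply add_le_add
          · rw [abs_mul, abs_of_nonneg (by linarith : (0:ℝ) ≤ t - s)]
          · exact (Finset.abs_sum_le_sum_abs _ _).trans
              (Finset.sum_le_sum fun j _ => hFd j)
      _ = Lf * (t - s) := by rw [hLf_def, add_mul, Finset.sum_mul]
  have hf0 : f 0 = dotProduct w z := by
    rw [hf_def]
    simp only [mul_zero, add_zero]
    have : ∀ j : Fin J, F j 0 = 0 := by
      intro j
      rw [hFyy j 0 le_rfl, hy0]
      rfl
    rw [Finset.sum_congr rfl fun j _ => this j]
    simp
  have hf_nn : ∀ s : ℝ, 0 ≤ s → 0 ≤ f s := by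
    intro s hs
    rw [hfQ s]
    apply Finset.sum_nonneg
    intro j _
    apply mul_nonneg (hw_nn j)
    rw [hQq s hs j]
    exact hq_nn s hs j
  -- a.e. derivative estimates
  have hae_deriv : ∀ᵐ t ∂(volume : Measure ℝ), 0 < t →
      (deriv f t ≤ 0 ∧ (0 < f t → deriv f t ≤ -ε)) := by
    have hrad : ∀ᵐ t ∂(volume : Measure ℝ), ∀ j, DifferentiableAt ℝ (F j) t := by
      rw [MeasureTheory.ae_all_iff]
      intro j
      exact (hFlip j).ae_differentiableAt
    filter_upwards [hrad] with t hdiff ht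
    set g : Fin J → ℝ := fun j => deriv (F j) t with hg_def
    have hdF : ∀ j, HasDerivAt (F j) (g j) t := fun j => (hdiff j).hasDerivAt
    have hdQ : ∀ j, HasDerivAt (Q j) (drift j + (g j - ∑ k, P k j * g k)) t := by
      intro j
      apply HasDerivAt.add
      · simpa using ((hasDerivAt_id t).const_mul (drift j)).const_add (z j)
      · exact (hdF j).sub (HasDerivAt.fun_sum fun k _ => (hdF k).const_mul (P k j))
    have hdf : HasDerivAt f (WD + ∑ j, g j) t := by
      apply HasDerivAt.add
      · simpa using ((hasDerivAt_id t).const_mul WD).const_add (dotProduct w z)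
      · exact HasDerivAt.fun_sum fun j _ => hdF j
    have hderiv_f : deriv f t = WD + ∑ j, g j := hdf.deriv
    set d : Fin J → ℝ := fun k => μ k - g k with hd_def
    have hQnn : ∀ j, 0 ≤ Q j t := by
      intro j
      rw [hQq t ht.le j]
      exact hq_nn t ht.le j
    -- case 1 : where the queue is positive, y (so F) is locally flat
    have hcase1 : ∀ j, 0 < Q j t → g j = 0 := by
      intro j hpos
      have hopen : {s : ℝ | 0 < Q j s ∧ 0 < s} ∈ 𝓝 t := by
        apply IsOpen.mem_nhds
        · exact (isOpen_lt continuous_const (hQcont j)).inter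
            (isOpen_lt continuous_const continuous_id)
        · exact ⟨hpos, ht⟩
      obtain ⟨η, hη, hball⟩ := Metric.mem_nhds_iff.mp hopen
      have hconst : (fun u => F j u) =ᶠ[𝓝 t] (fun _ => F j t) := by
        filter_upwards [Metric.ball_mem_nhds t hη] with u hu
        have hu' := hball hu
        have hu0 : 0 < u := hu'.2
        rw [Metric.mem_ball, Real.dist_eq, abs_sub_lt_iff] at hu
        have hsub : ∀ v', v' ∈ Set.uIcc u t → v' ∈ Metric.ball t η := by
          intro v' hv'
          rw [Metric.mem_ball, Real.dist_eq, abs_sub_lt_iff]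
          rcases le_total u t with h | h
          · rw [Set.uIcc_of_le h] at hv'
            constructor <;> [linarith [hv'.2]; linarith [hv'.1]]
          · rw [Set.uIcc_of_ge h] at hv'
            constructor <;> [linarith [hv'.2]; linarith [hv'.1]]
        rcases le_total u t with h | h
        · -- u ≤ t : q > 0 on Ioc u t
          have := hflat j u t hu0.le h (fun s' hs' => by
            have hm : s' ∈ Metric.ball t η := hsub s' (by
              rw [Set.uIcc_of_le h]; exact ⟨hs'.1.le, hs'.2⟩)
            have := (hball hm).1
            rwa [hQq s' (hu0.le.trans hs'.1.le) j] at this)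
          rw [hFyy j u hu0.le, hFyy j t ht.le, this]
        · -- t ≤ u
          have := hflat j t u ht.le h (fun s' hs' => by
            have hm : s' ∈ Metric.ball t η := hsub s' (by
              rw [Set.uIcc_of_ge h]; exact ⟨hs'.1.le, hs'.2⟩)
            have := (hball hm).1
            rwa [hQq s' (ht.le.trans hs'.1.le) j] at this)
          rw [hFyy j u hu0.le, hFyy j t ht.le, this]
      have hder0 : HasDerivAt (F j) 0 t :=
        (hasDerivAt_const t (F j t)).congr_of_eventuallyEq hconst
      exact (hder0.unique (hdF j)).symm
    -- case 2 : where the queue is zero, flow balance holds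
    have hcase2 : ∀ j, Q j t = 0 → d j = α j + ∑ k, P k j * d k := by
      intro j hzero
      have hmin : IsLocalMin (Q j) t := by
        show ∀ᶠ u in 𝓝 t, Q j t ≤ Q j u
        filter_upwards [eventually_gt_nhds ht] with u hu
        rw [hzero, hQq u hu.le j]
        exact hq_nn u hu.le j
      have h0 := hmin.hasDerivAt_eq_zero (hdQ j)
      have hdr : drift j = α j - μ j + ∑ k, P k j * μ k := by
        show α j - (1 - P.transpose).mulVec μ j = _
        rw [hmv P.transpose μ j, hmv2]
        have : ∑ k, P.transpose j k * μ k = ∑ k, P k j * μ k :=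
          Finset.sum_congr rfl fun k _ => by rw [Matrix.transpose_apply]
        rw [this]
        ring
      have hsum2 : ∑ k, P k j * d k = ∑ k, P k j * μ k - ∑ k, P k j * g k := by
        rw [← Finset.sum_sub_distrib]
        exact Finset.sum_congr rfl fun k _ => by rw [hd_def]; ring
      show μ j - g j = α j + ∑ k, P k j * d k
      rw [hsum2]
      rw [hdr] at h0
      linarith
    -- λ ≤ d
    have hld : ∀ j, lam j ≤ d j := by
      set u : Fin J → ℝ := fun k => lam k - d k with hu_def
      set p : Fin J → ℝ := fun k => max (u k) 0 with hp_def
      have hp_nn : ∀ k, 0 ≤ p k := fun k => le_max_right _ _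
      have hup : ∀ k, u k ≤ p k := fun k => le_max_left _ _
      have hp : ∀ j, p j ≤ P.transpose.mulVec p j := by
        intro j
        have hnn : 0 ≤ P.transpose.mulVec p j := mulVec_nonneg _ hPTnn hp_nn j
        rcases eq_or_lt_of_le (hQnn j) with hzero | hpos
        · -- Q j t = 0
          have hdj := hcase2 j hzero.symm
          have hu_eq : u j = P.transpose.mulVec u j := by
            show lam j - d j = _
            rw [hmv2]
            have h7 : ∑ k, P.transpose j k * u k
                = ∑ k, P k j * lam k - ∑ k, P k j * d k := by
              rw [← Finset.sum_sub_distrib]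
              exact Finset.sum_congr rfl fun k _ => by
                rw [Matrix.transpose_apply, hu_def]; ring
            rw [h7]
            have h8 := hlam_eq j
            rw [hmv2] at h8
            have h9 : ∑ k, P.transpose j k * lam k = ∑ k, P k j * lam k :=
              Finset.sum_congr rfl fun k _ => by rw [Matrix.transpose_apply]
            rw [h9] at h8
            linarith [hdj]
          have := mulVec_mono P.transpose hPTnn hup j
          apply max_le _ hnn
          rw [hu_eq]
          exact this
        · -- 0 < Q j t
          have hgj := hcase1 j hpos
          have : u j < 0 := by
            show lam j - d j < 0
            rw [hd_def]
            simp only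
            rw [hgj]
            have := hε_le j
            linarith
          rw [hp_def]
          simp only
          rw [max_eq_right this.le]
          exact hnn
      have hple := le_zero_of_le_mulVec P.transpose hPTnn hsmallPT p hp
      intro j
      have := (hup j).trans (hple j)
      rw [hu_def] at this
      simp only at this
      linarith
    -- assemble the derivative bound
    have hderiv_eq : deriv f t = ∑ j, (lam j - d j) := by
      rw [hderiv_f, hWD]
      have h20 : ∑ j, (lam j - d j) = ∑ j, (lam j - μ j + g j) :=
        Finset.sum_congr rfl fun j _ => by rw [hd_def]; ring
      rw [h20, Finset.sum_add_distrib, Finset.sum_sub_distrib]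
    constructor
    · rw [hderiv_eq]
      exact Finset.sum_nonpos fun j _ => by linarith [hld j]
    · intro hfpos
      have hex : ∃ j, 0 < Q j t := by
        by_contra hcon
        push_neg at hcon
        have : ∀ j, Q j t = 0 := fun j => le_antisymm (hcon j) (hQnn j)
        rw [hfQ t] at hfpos
        have : ∑ j, w j * Q j t = 0 :=
          Finset.sum_eq_zero fun j _ => by rw [this j, mul_zero]
        linarith
      obtain ⟨j0, hj0⟩ := hex
      have hdj0 : d j0 = μ j0 := by
        rw [hd_def]
        simp only
        rw [hcase1 j0 hj0]
        ring
      rw [hderiv_eq]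
      have h11 : ∑ j, (lam j - d j)
          = (lam j0 - d j0) + ∑ j ∈ Finset.univ.erase j0, (lam j - d j) := by
        exact (Finset.add_sum_erase _ _ (Finset.mem_univ j0)).symm
      rw [h11, hdj0]
      have h12 : ∑ j ∈ Finset.univ.erase j0, (lam j - d j) ≤ 0 :=
        Finset.sum_nonpos fun j _ => by linarith [hld j]
      have h13 := hε_le j0
      linarith
  -- conclusion
  intro t ht
  have hwz_nn : 0 ≤ dotProduct w z := by
    rw [hdot]
    exact Finset.sum_nonneg fun j _ => mul_nonneg (hw_nn j) (hz j)
  have ht0 : (0:ℝ) ≤ t := le_trans (div_nonneg hwz_nn hε_pos.le) ht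
  have hdec0 : ∀ a b : ℝ, 0 ≤ a → a ≤ b → f b ≤ f a := by
    intro a b ha hab
    have hdec := lipschitz_decay hfLip hab (c := 0) (by
      filter_upwards [hae_deriv] with s hs hmem
      exact (hs (lt_of_le_of_lt ha hmem.1)).1)
    linarith
  have hft : f t = 0 := by
    rcases eq_or_lt_of_le (hf_nn t ht0) with h | hftpos
    · exact h.symm
    · exfalso
      have hpos_all : ∀ s, 0 ≤ s → s ≤ t → 0 < f s := fun s hs hst =>
        lt_of_lt_of_le hftpos (hdec0 s t hs hst)
      have hdecε := lipschitz_decay hfLip ht0 (c := -ε) (by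
        filter_upwards [hae_deriv] with s hs hmem
        exact (hs hmem.1).2 (hpos_all s hmem.1.le hmem.2))
      rw [hf0] at hdecε
      have h14 : dotProduct w z ≤ ε * t := by
        rw [div_le_iff₀ hε_pos] at ht
        linarith
      linarith
  have hQt : ∀ j, Q j t = 0 := by
    have hsum : ∑ j, w j * Q j t = 0 := by rw [← hfQ t]; exact hft
    have hterm : ∀ j ∈ Finset.univ, 0 ≤ w j * Q j t := fun j _ =>
      mul_nonneg (hw_nn j) (by rw [hQq t ht0 j]; exact hq_nn t ht0 j)
    have hall := (Finset.sum_eq_zero_iff_of_nonneg hterm).mp hsum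
    intro j
    have hj := hall j (Finset.mem_univ j)
    rcases mul_eq_zero.mp hj with h | h
    · exfalso; linarith [hw_ge1 j]
    · exact h
  funext j
  rw [← hQq t ht0 j, hQt j]
  rfl

end
end

section
/- Let z ∈ ℝ^J with z ≥ 0 componentwise, let α ∈ ℝ^J with α ≥ 0 componentwise, let μ ∈ ℝ^J with μ_j > 0 for all j, set λ = (I − Pᵀ)⁻¹ α and ρ_j = λ_j / μ_j, and assume ρ_j < 1 for every j. Let w = (I − P)⁻¹ e, where e is the all-ones vector, define the linear input x(t) = z + (α − (I − Pᵀ)μ)·t, and let (y, q) be a solution of the Skorohod problem with input x and reflection matrix I − Pᵀ. Then the function t ↦ wᵀ q(t) is Lipschitz continuous on [0,∞), and at every point t > 0 at which q is differentiable and q(t) ≠ 0, the derivative satisfies (d/dt)(wᵀ q)(t) ≤ −min_{1 ≤ j ≤ J} μ_j (1 − ρ_j). -/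
open MeasureTheory Filter Topology

noncomputable section

attribute [local instance] Matrix.linftyOpNormedRing Matrix.linftyOpNormedAlgebra

namespace SkorohodAux

variable {J : ℕ}

lemma pow_entry_nonneg (Q : Matrix (Fin J) (Fin J) ℝ) (hQ : ∀ i j, 0 ≤ Q i j) (n : ℕ) :
    ∀ i j, 0 ≤ (Q ^ n) i j := by
  induction n with
  | zero => intro i j; simp [Matrix.one_apply]; positivity
  | succ n ih =>
    intro i j
    rw [pow_succ, Matrix.mul_apply]
    exact Finset.sum_nonneg fun k _ => mul_nonneg (ih i k) (hQ k j)

lemma pow_entry_le_pow (A B : Matrix (Fin J) (Fin J) ℝ) (hA : ∀ i j, 0 ≤ A i j)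
    (hAB : ∀ i j, A i j ≤ B i j) (n : ℕ) : ∀ i j, (A ^ n) i j ≤ (B ^ n) i j := by
  induction n with
  | zero => intro i j; simp
  | succ n ih =>
    intro i j
    rw [pow_succ, pow_succ, Matrix.mul_apply, Matrix.mul_apply]
    refine Finset.sum_le_sum fun k _ => ?_
    exact mul_le_mul (ih i k) (hAB k j) (hA k j) (le_trans (pow_entry_nonneg A hA n i k) (ih i k))

lemma norm_le_of_entry_le (A B : Matrix (Fin J) (Fin J) ℝ)
    (h : ∀ i j, |A i j| ≤ B i j) : ‖A‖ ≤ ‖B‖ := by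
  rw [Matrix.linfty_opNorm_def, Matrix.linfty_opNorm_def]
  norm_cast
  apply Finset.sup_mono_fun
  intro i _
  apply Finset.sum_le_sum
  intro j _
  have h1 : ‖A i j‖ ≤ ‖B i j‖ := by
    rw [Real.norm_eq_abs, Real.norm_eq_abs]
    exact (h i j).trans (le_abs_self _)
  exact h1

lemma entry_abs_le_norm (A : Matrix (Fin J) (Fin J) ℝ) (i j : Fin J) : |A i j| ≤ ‖A‖ := by
  rw [Matrix.linfty_opNorm_def]
  have h1 : ‖A i j‖₊ ≤ ∑ k, ‖A i k‖₊ :=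
    Finset.single_le_sum (f := fun k => ‖A i k‖₊) (fun k _ => zero_le) (Finset.mem_univ j)
  have h2 : (∑ k, ‖A i k‖₊) ≤ (Finset.univ : Finset (Fin J)).sup fun i => ∑ k, ‖A i k‖₊ :=
    Finset.le_sup (f := fun i => ∑ k, ‖A i k‖₊) (Finset.mem_univ i)
  calc |A i j| = (‖A i j‖₊ : ℝ) := by rw [coe_nnnorm, Real.norm_eq_abs]
  _ ≤ _ := by exact_mod_cast h1.trans h2

theorem neumann (Q : Matrix (Fin J) (Fin J) ℝ) (hQ : ∀ i j, 0 ≤ Q i j)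
    (n : ℕ) (hn : ‖Q ^ n‖ < 1) :
    IsUnit (1 - Q).det ∧ ∀ i j, 0 ≤ (1 - Q)⁻¹ i j := by
  set u : (Matrix (Fin J) (Fin J) ℝ)ˣ := Units.oneSub (Q ^ n) hn with hu
  set S : Matrix (Fin J) (Fin J) ℝ := ∑ k ∈ Finset.range n, Q ^ k with hS
  have hgeom : (1 - Q) * S = 1 - Q ^ n := by
    have := mul_geom_sum Q n
    have h2 : (1 - Q) * S = -((Q - 1) * S) := by noncomm_ring
    rw [h2, this]; noncomm_ring
  have hkey : (1 - Q) * (S * (↑u⁻¹ : Matrix (Fin J) (Fin J) ℝ)) = 1 := by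
    rw [← mul_assoc, hgeom]
    exact u.mul_inv
  have hinvertible : Invertible (1 - Q) := invertibleOfRightInverse _ _ hkey
  have hdet : IsUnit (1 - Q).det := (Matrix.isUnit_iff_isUnit_det _).mp (isUnit_of_invertible _)
  refine ⟨hdet, ?_⟩
  have hinv : (1 - Q)⁻¹ = S * (↑u⁻¹ : Matrix (Fin J) (Fin J) ℝ) := Matrix.inv_eq_right_inv hkey
  have hsum : Summable (fun k : ℕ => (Q ^ n) ^ k) := summable_geometric_of_norm_lt_one hn
  have huinv : (↑u⁻¹ : Matrix (Fin J) (Fin J) ℝ) = ∑' k : ℕ, (Q ^ n) ^ k := rfl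
  have huentry : ∀ i j, 0 ≤ (↑u⁻¹ : Matrix (Fin J) (Fin J) ℝ) i j := by
    intro i j
    rw [huinv]
    set L : Matrix (Fin J) (Fin J) ℝ := ∑' k : ℕ, (Q ^ n) ^ k with hL
    have htd : Tendsto (fun m => ∑ k ∈ Finset.range m, (Q ^ n) ^ k) atTop (𝓝 L) :=
      hsum.hasSum.tendsto_sum_nat
    have htd2 : Tendsto (fun m => (∑ k ∈ Finset.range m, (Q ^ n) ^ k) i j) atTop (𝓝 (L i j)) := by
      exact ((continuous_id.matrix_elem i j).tendsto L).comp htd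
    refine ge_of_tendsto htd2 (Eventually.of_forall fun m => ?_)
    rw [Matrix.sum_apply]
    exact Finset.sum_nonneg fun k _ => pow_entry_nonneg Q hQ (n * k) i j |>.trans_eq
      (by rw [pow_mul])
  intro i j
  rw [hinv, Matrix.mul_apply]
  refine Finset.sum_nonneg fun k _ => mul_nonneg ?_ (huentry k j)
  rw [hS, Matrix.sum_apply]
  exact Finset.sum_nonneg fun m _ => pow_entry_nonneg Q hQ m i k

theorem exists_pow_norm_lt (hJ : 0 < J) (P : Matrix (Fin J) (Fin J) ℝ)
    (hspec : ∀ μ ∈ spectrum ℂ (P.map (algebraMap ℝ ℂ)), ‖μ‖ < 1) :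
    ∃ n, 0 < n ∧ ‖P ^ n‖ < 1 := by
  haveI : Nonempty (Fin J) := ⟨⟨0, hJ⟩⟩
  set Pc : Matrix (Fin J) (Fin J) ℂ := P.map (algebraMap ℝ ℂ) with hPc
  have hrad : spectralRadius ℂ Pc < 1 := by
    have := spectrum.spectralRadius_lt_of_forall_lt (a := Pc) (r := 1)
      (fun z hz => by simpa [← NNReal.coe_lt_coe, coe_nnnorm] using hspec z hz)
    simpa using this
  have hgel := spectrum.pow_nnnorm_pow_one_div_tendsto_nhds_spectralRadius Pc
  have hev : ∀ᶠ n : ℕ in atTop, ((‖Pc ^ n‖₊ : ENNReal) ^ (1 / (n:ℝ))) < 1 :=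
    hgel.eventually_lt_const hrad
  obtain ⟨n, hn1, hnlt⟩ := ((eventually_ge_atTop 1).and hev).exists
  refine ⟨n, hn1, ?_⟩
  have hlt : ‖Pc ^ n‖₊ < 1 := by
    by_contra hge
    push_neg at hge
    have h1 : (1 : ENNReal) ≤ ((‖Pc ^ n‖₊ : ENNReal) ^ (1 / (n:ℝ))) := by
      calc (1 : ENNReal) = 1 ^ (1 / (n:ℝ)) := by rw [ENNReal.one_rpow]
      _ ≤ _ := by
        apply ENNReal.rpow_le_rpow _ (by positivity)
        exact_mod_cast hge
    exact absurd hnlt (not_lt.mpr h1)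
  have hnorm_eq : ‖Pc ^ n‖₊ = ‖P ^ n‖₊ := by
    have hpow : Pc ^ n = (P ^ n).map (algebraMap ℝ ℂ) := by
      have : Pc = (algebraMap ℝ ℂ).mapMatrix P := rfl
      rw [this, ← map_pow]; rfl
    rw [hpow, Matrix.linfty_opNNNorm_def, Matrix.linfty_opNNNorm_def]
    congr 1
    funext i
    congr 1
    funext j
    simp [Matrix.map_apply, Complex.nnnorm_real]
  rw [hnorm_eq] at hlt
  have : (‖P ^ n‖₊ : ℝ) < ((1 : NNReal) : ℝ) := by exact_mod_cast hlt
  simpa using this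

lemma oneSubT_mulVec (P : Matrix (Fin J) (Fin J) ℝ) (v : Fin J → ℝ) (j : Fin J) :
    ((1 - P.transpose).mulVec v) j = v j - ∑ k, P k j * v k := by
  rw [Matrix.sub_mulVec]
  simp [Matrix.one_mulVec, Matrix.mulVec, dotProduct, Matrix.transpose_apply]

lemma dot_oneSubT (P : Matrix (Fin J) (Fin J) ℝ) (w v : Fin J → ℝ) :
    dotProduct w ((1 - P.transpose).mulVec v)
      = dotProduct ((1 - P).mulVec w) v := by
  have h1 : (1 - P.transpose) = (1 - P).transpose := by
    rw [Matrix.transpose_sub, Matrix.transpose_one]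
  rw [h1, Matrix.dotProduct_mulVec, Matrix.vecMul_transpose]

end SkorohodAux

open SkorohodAux

/-- The fluid workload `t ↦ wᵀ q(t)` is Lipschitz on `[0, ∞)`, and wherever `q`
is differentiable with `q(t) ≠ 0`, the derivative of the workload is at most
`−min_j μ_j (1 − ρ_j)`. -/
theorem fluid_workload_lipschitz_and_drift {J : ℕ} (hJ : 0 < J)
    (P : Matrix (Fin J) (Fin J) ℝ) (hP : IsSubstochasticSpecLtOne P)
    (z α μ : Fin J → ℝ) (hz : ∀ j, 0 ≤ z j) (hα : ∀ j, 0 ≤ α j)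
    (hμ : ∀ j, 0 < μ j)
    (lam : Fin J → ℝ) (hlam : lam = ((1 - P.transpose)⁻¹).mulVec α)
    (hρ : ∀ j, lam j / μ j < 1)
    (w : Fin J → ℝ) (hw : w = ((1 - P)⁻¹).mulVec (fun _ => 1))
    (x : ℝ → Fin J → ℝ)
    (hx : ∀ t : ℝ, x t = fun j => z j + (α j - ((1 - P.transpose).mulVec μ) j) * t)
    (y q : ℝ → Fin J → ℝ) (hsol : IsSkorohodSolution P x y q) :
    (∃ L : NNReal, LipschitzOnWith L (fun t => dotProduct w (q t)) (Set.Ici (0 : ℝ))) ∧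
    ∀ t : ℝ, 0 < t → ∀ d : Fin J → ℝ, HasDerivAt q d t → q t ≠ 0 →
      dotProduct w d ≤ -(⨅ j, μ j * (1 - lam j / μ j)) := by
  classical
  obtain ⟨hPnn, hProw, hPspec⟩ := hP
  obtain ⟨hq_eq, hq_nn, hy0, hy_mono, hy_rc, hy_st⟩ := hsol
  choose F hF1 hF2 using hy_st
  obtain ⟨n, hn0, hPn⟩ := exists_pow_norm_lt hJ P hPspec
  obtain ⟨hdetP, hNP⟩ := neumann P hPnn n hPn
  -- basic matrix facts
  have h1PT : (1 - P.transpose) = (1 - P).transpose := by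
    rw [Matrix.transpose_sub, Matrix.transpose_one]
  have hdetPT : IsUnit (1 - P.transpose).det := by
    rw [h1PT, Matrix.det_transpose]; exact hdetP
  set N : Matrix (Fin J) (Fin J) ℝ := (1 - P.transpose)⁻¹ with hNdef
  have hN_nn : ∀ i j, 0 ≤ N i j := by
    intro i j
    rw [hNdef, h1PT, ← Matrix.transpose_nonsing_inv]
    exact hNP j i
  have hmulN : ∀ v : Fin J → ℝ, (1 - P.transpose).mulVec (N.mulVec v) = v := by
    intro v
    rw [Matrix.mulVec_mulVec, Matrix.mul_nonsing_inv _ hdetPT, Matrix.one_mulVec]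
  have hNmul : ∀ v : Fin J → ℝ, N.mulVec ((1 - P.transpose).mulVec v) = v := by
    intro v
    rw [Matrix.mulVec_mulVec, Matrix.nonsing_inv_mul _ hdetPT, Matrix.one_mulVec]
  have hones : (1 - P).mulVec w = fun _ => 1 := by
    rw [hw, Matrix.mulVec_mulVec, Matrix.mul_nonsing_inv _ hdetP, Matrix.one_mulVec]
  -- drift vector
  set b : Fin J → ℝ := fun j => α j - ((1 - P.transpose).mulVec μ) j with hbdef
  have hxj : ∀ (s : ℝ) (j : Fin J), x s j = z j + b j * s := by
    intro s j; rw [hx]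
  set v : Fin J → ℝ := fun j => μ j - lam j with hvdef
  have hv_pos : ∀ j, 0 < v j := by
    intro j
    have := (div_lt_one (hμ j)).mp (hρ j)
    simp [hvdef]; linarith
  have hαlam : (1 - P.transpose).mulVec lam = α := by
    rw [hlam]; exact hmulN α
  have hveq : ∀ j, v j - ∑ k, P k j * v k = -b j := by
    intro j
    have e1 := oneSubT_mulVec P μ j
    have e2 := oneSubT_mulVec P lam j
    rw [hαlam] at e2
    have e3 : ∑ k, P k j * v k = ∑ k, P k j * μ k - ∑ k, P k j * lam k := by
      rw [← Finset.sum_sub_distrib]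
      exact Finset.sum_congr rfl fun k _ => by simp only [hvdef]; ring
    rw [e3]
    simp only [hvdef, hbdef]
    linarith [e1, e2]
  have hbvec : b = fun j => -(((1 - P.transpose).mulVec v) j) := by
    funext j
    rw [oneSubT_mulVec]
    linarith [hveq j]
  -- Stieltjes facts
  have hFy : ∀ (j : Fin J) (s : ℝ), 0 ≤ s → F j s = y s j := by
    intro j s hs
    rw [hF1 j s, max_eq_left hs]
  -- q expansion
  have hqF : ∀ (s : ℝ), 0 ≤ s → ∀ j, q s j = x s j + y s j - ∑ k, P k j * y s k := by
    intro s hs j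
    have := congrFun (hq_eq s hs) j
    rw [this, Pi.add_apply, oneSubT_mulVec]
    ring
  -- null sets
  have hnull : ∀ (j : Fin J) (T : ℝ), 0 ≤ T →
      (F j).measure ({s : ℝ | q s j ≠ 0} ∩ Set.Icc (0:ℝ) T) = 0 := by
    intro j T hT
    set μm := (F j).measure with hμm
    set g : ℝ → ℝ := fun s => x s j + F j s - ∑ k, P k j * F k s with hgdef
    have hgq : ∀ s ∈ Set.Icc (0:ℝ) T, g s = q s j := by
      intro s hs
      rw [hgdef]
      simp only
      rw [hqF s hs.1 j, hFy j s hs.1]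
      congr 1
      exact Finset.sum_congr rfl fun k _ => by rw [hFy k s hs.1]
    have hgmeas : Measurable g := by
      apply Measurable.sub
      · apply Measurable.add
        · have : (fun s => x s j) = fun s => z j + b j * s := funext fun s => hxj s j
          rw [this]
          exact (measurable_const.mul measurable_id).const_add _
        · exact (F j).mono.measurable
      · exact Finset.measurable_sum _ fun k _ => ((F k).mono.measurable).const_mul _
    haveI hfin : IsFiniteMeasure (μm.restrict (Set.Icc (0:ℝ) T)) := by
      constructor
      rw [Measure.restrict_apply_univ]
      exact (isCompact_Icc).measure_lt_top
    have hbound : ∀ s ∈ Set.Icc (0:ℝ) T, ‖g s‖ ≤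
        (|z j| + |b j| * T) + (|F j 0| + |F j T|) + ∑ k, |P k j| * (|F k 0| + |F k T|) := by
      intro s hs
      have hFb : ∀ k : Fin J, |F k s| ≤ |F k 0| + |F k T| := by
        intro k
        have h1 : F k 0 ≤ F k s := (F k).mono hs.1
        have h2 : F k s ≤ F k T := (F k).mono hs.2
        rw [abs_le]
        constructor
        · have := neg_abs_le (F k 0); linarith [abs_nonneg (F k T)]
        · have := le_abs_self (F k T); linarith [abs_nonneg (F k 0)]
      have hxb : |x s j| ≤ |z j| + |b j| * T := by
        rw [hxj s j]
        refine (abs_add_le _ _).trans ?_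
        gcongr
        rw [abs_mul]
        have : |s| ≤ T := by rw [abs_le]; constructor <;> linarith [hs.1, hs.2]
        calc |b j| * |s| ≤ |b j| * T := by gcongr
        _ = |b j| * T := rfl
      have hsb : |∑ k, P k j * F k s| ≤ ∑ k, |P k j| * (|F k 0| + |F k T|) := by
        refine (Finset.abs_sum_le_sum_abs _ _).trans ?_
        refine Finset.sum_le_sum fun k _ => ?_
        rw [abs_mul]
        exact mul_le_mul_of_nonneg_left (hFb k) (abs_nonneg _)
      rw [Real.norm_eq_abs, hgdef]
      simp only
      calc |x s j + F j s - ∑ k, P k j * F k s| ≤ |x s j| + |F j s| + |∑ k, P k j * F k s| := by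
            have := abs_add_le (x s j + F j s) (-(∑ k, P k j * F k s))
            have h2 := abs_add_le (x s j) (F j s)
            rw [abs_neg] at this
            calc |x s j + F j s - ∑ k, P k j * F k s|
                = |x s j + F j s + -(∑ k, P k j * F k s)| := by ring_nf
            _ ≤ _ := by linarith
      _ ≤ _ := add_le_add (add_le_add hxb (hFb j)) hsb
    have hgint : Integrable g (μm.restrict (Set.Icc (0:ℝ) T)) := by
      refine Integrable.mono' (integrable_const ((|z j| + |b j| * T) + (|F j 0| + |F j T|)
        + ∑ k, |P k j| * (|F k 0| + |F k T|))) hgmeas.aestronglyMeasurable ?_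
      rw [ae_restrict_iff' measurableSet_Icc]
      exact ae_of_all _ hbound
    have hint0 : ∫ s in Set.Icc (0:ℝ) T, g s ∂μm = 0 := by
      rw [setIntegral_congr_fun measurableSet_Icc hgq]
      exact hF2 j T hT
    have hgnn : 0 ≤ᵐ[μm.restrict (Set.Icc (0:ℝ) T)] g := by
      have h := (ae_restrict_iff' (μ := μm) (p := fun s => (0:ℝ) ≤ g s) measurableSet_Icc).mpr
        (ae_of_all _ (fun s hs => by rw [hgq s hs]; exact hq_nn s hs.1 j))
      filter_upwards [h] with s hs
      exact hs
    have hae : g =ᵐ[μm.restrict (Set.Icc (0:ℝ) T)] 0 :=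
      (integral_eq_zero_iff_of_nonneg_ae hgnn hgint).mp hint0
    have hres : μm.restrict (Set.Icc (0:ℝ) T) {s | g s ≠ 0} = 0 := by
      have := hae
      rw [EventuallyEq, ae_iff] at this
      simpa using this
    rw [Measure.restrict_apply (by
      have : MeasurableSet {s | g s ≠ 0} := (hgmeas (measurableSet_singleton 0)).compl
      exact this)] at hres
    refine measure_mono_null ?_ hres
    intro s hs
    exact ⟨fun h0 => hs.1 ((hgq s hs.2).symm.trans h0), hs.2⟩
  -- key oscillation inequality
  have hkey : ∀ s t : ℝ, 0 ≤ s → s ≤ t → ∀ j,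
      y t j - y s j ≤ |b j| * (t - s) + ∑ k, P k j * (y t k - y s k) := by
    intro s t hs hst j
    have htnn : (0:ℝ) ≤ t := hs.trans hst
    have hyd_nn : ∀ k, 0 ≤ y t k - y s k := fun k =>
      sub_nonneg.mpr (hy_mono k (Set.mem_Ici.mpr hs) (Set.mem_Ici.mpr htnn) hst)
    have hRHS_nn : 0 ≤ |b j| * (t - s) + ∑ k, P k j * (y t k - y s k) := by
      have h1 : 0 ≤ ∑ k, P k j * (y t k - y s k) :=
        Finset.sum_nonneg fun k _ => mul_nonneg (hPnn k j) (hyd_nn k)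
      have h2 : 0 ≤ |b j| * (t - s) := mul_nonneg (abs_nonneg _) (by linarith)
      linarith
    by_cases h0 : (F j).measure (Set.Ioc s t) = 0
    · have hFts : F j t = F j s := by
        rw [StieltjesFunction.measure_Ioc, ENNReal.ofReal_eq_zero] at h0
        have h2 : F j s ≤ F j t := (F j).mono hst
        linarith
      have hyts : y t j - y s j = 0 := by
        rw [← hFy j t htnn, ← hFy j s hs, hFts]; ring
      linarith
    · set A : Set ℝ := {u | u ∈ Set.Ioc s t ∧ q u j = 0} with hAdef
      have hsub0 : ∀ u, u ∈ Set.Ioc s t → q u j ≠ 0 →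
          u ∈ {p : ℝ | q p j ≠ 0} ∩ Set.Icc 0 t := by
        intro u hu hq
        exact ⟨hq, ⟨le_of_lt (lt_of_le_of_lt hs hu.1), hu.2⟩⟩
      have hA_ne : A.Nonempty := by
        by_contra hne
        rw [Set.not_nonempty_iff_eq_empty] at hne
        apply h0
        refine measure_mono_null (fun u hu => ?_) (hnull j t htnn)
        refine hsub0 u hu fun hq => ?_
        have hmem : u ∈ A := ⟨hu, hq⟩
        rw [hne] at hmem; exact hmem
      have hbddA : BddAbove A := ⟨t, fun u hu => hu.1.2⟩
      set c : ℝ := sSup A with hcdef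
      obtain ⟨a0, ha0⟩ := hA_ne
      have hc_mem : c ∈ Set.Ioc s t :=
        ⟨lt_of_lt_of_le ha0.1.1 (le_csSup hbddA ha0), csSup_le ⟨a0, ha0⟩ fun u hu => hu.1.2⟩
      have hc_pos : (0:ℝ) < c := lt_of_le_of_lt hs hc_mem.1
      have hstep1 : F j t = F j c := by
        have hnull2 : (F j).measure (Set.Ioc c t) = 0 := by
          refine measure_mono_null (fun u hu => ?_) (hnull j t htnn)
          refine hsub0 u ⟨lt_trans hc_mem.1 hu.1, hu.2⟩ fun hq => ?_
          exact absurd (le_csSup hbddA ⟨⟨lt_trans hc_mem.1 hu.1, hu.2⟩, hq⟩) (not_le.mpr hu.1)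
        rw [StieltjesFunction.measure_Ioc, ENNReal.ofReal_eq_zero] at hnull2
        have := (F j).mono hc_mem.2
        linarith
      have hsumFy : ∀ (u:ℝ), 0 ≤ u → ∑ k, P k j * F k u = ∑ k, P k j * y u k :=
        fun u hu => Finset.sum_congr rfl fun k _ => by rw [hFy k u hu]
      have hstep2 : F j c ≤ -(x c j) + ∑ k, P k j * F k c := by
        by_cases hqc : q c j = 0
        · have hexp := hqF c hc_pos.le j
          rw [hqc] at hexp
          rw [hFy j c hc_pos.le, hsumFy c hc_pos.le]
          linarith
        · have hsing : (F j).measure {c} = 0 := by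
            refine measure_mono_null (fun p hp => ?_) (hnull j t htnn)
            rw [Set.mem_singleton_iff] at hp; subst hp
            exact ⟨hqc, ⟨hc_pos.le, hc_mem.2⟩⟩
          have hll : Function.leftLim (F j) c = F j c := by
            rw [StieltjesFunction.measure_singleton, ENNReal.ofReal_eq_zero] at hsing
            have := Monotone.leftLim_le (F j).mono (le_refl c)
            linarith
          obtain ⟨cs, hcs_mono, hcs_tendsto, hcs_mem⟩ := exists_seq_tendsto_sSup ⟨a0, ha0⟩ hbddA
          rw [← hcdef] at hcs_tendsto
          have hcs_lt : ∀ m, cs m < c := by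
            intro m
            refine lt_of_le_of_ne (le_csSup hbddA (hcs_mem m)) ?_
            intro he; exact hqc (he ▸ (hcs_mem m).2)
          have hcs_pos : ∀ m, (0:ℝ) ≤ cs m := fun m =>
            le_of_lt (lt_of_le_of_lt hs (hcs_mem m).1.1)
          have htendF : Tendsto (fun m => F j (cs m)) atTop (𝓝 (F j c)) := by
            rw [← hll]
            exact ((F j).mono.tendsto_leftLim c).comp
              (tendsto_nhdsWithin_of_tendsto_nhds_of_eventually_within _ hcs_tendsto
                (Eventually.of_forall hcs_lt))
          have htendR : Tendsto (fun m => -(x (cs m) j) + ∑ k, P k j * F k c) atTop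
              (𝓝 (-(x c j) + ∑ k, P k j * F k c)) := by
            have h1 : Tendsto (fun m => x (cs m) j) atTop (𝓝 (x c j)) := by
              simp only [hxj]
              exact tendsto_const_nhds.add (hcs_tendsto.const_mul (b j))
            exact (h1.neg).add tendsto_const_nhds
          refine le_of_tendsto_of_tendsto' htendF htendR fun m => ?_
          have hexp := hqF (cs m) (hcs_pos m) j
          rw [(hcs_mem m).2] at hexp
          have h3 : ∑ k, P k j * y (cs m) k ≤ ∑ k, P k j * F k c := by
            refine Finset.sum_le_sum fun k _ => ?_
            refine mul_le_mul_of_nonneg_left ?_ (hPnn k j)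
            rw [← hFy k (cs m) (hcs_pos m)]
            exact (F k).mono (hcs_lt m).le
          rw [hFy j (cs m) (hcs_pos m)]
          linarith
      have hy_t : y t j = F j c := by rw [← hFy j t htnn, hstep1]
      have hqs := hqF s hs j
      have hqs_nn := hq_nn s hs j
      have hxc : x s j - x c j = b j * (s - c) := by rw [hxj, hxj]; ring
      have habs : b j * (s - c) ≤ |b j| * (t - s) := by
        refine (le_abs_self _).trans ?_
        rw [abs_mul]
        refine mul_le_mul_of_nonneg_left ?_ (abs_nonneg _)
        rw [abs_le]
        constructor <;> [linarith [hc_mem.2, hc_mem.1]; linarith [hc_mem.2, hc_mem.1]]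
      have hsumle : ∑ k, P k j * F k c ≤ ∑ k, P k j * y t k := by
        rw [hsumFy c hc_pos.le]
        refine Finset.sum_le_sum fun k _ => ?_
        refine mul_le_mul_of_nonneg_left ?_ (hPnn k j)
        exact hy_mono k (Set.mem_Ici.mpr hc_pos.le) (Set.mem_Ici.mpr htnn) hc_mem.2
      have splitsum : ∑ k, P k j * (y t k - y s k)
          = ∑ k, P k j * y t k - ∑ k, P k j * y s k := by
        rw [← Finset.sum_sub_distrib]
        exact Finset.sum_congr rfl fun k _ => by ring
      rw [splitsum]
      linarith
  -- workload identity
  have hdot1 : ∀ u : Fin J → ℝ,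
      dotProduct w ((1 - P.transpose).mulVec u) = ∑ j, u j := by
    intro u
    rw [dot_oneSubT, hones]
    simp [dotProduct]
  have hwq : ∀ t : ℝ, 0 ≤ t →
      dotProduct w (q t) = dotProduct w (x t) + ∑ j, y t j := by
    intro t ht
    rw [hq_eq t ht, dotProduct_add, hdot1]
  set c1 : ℝ := ∑ j, w j * b j with hc1def
  have hwx : ∀ t : ℝ, dotProduct w (x t) = (∑ j, w j * z j) + c1 * t := by
    intro t
    rw [hc1def]
    simp only [dotProduct, hxj, mul_add, Finset.sum_add_distrib, Finset.sum_mul]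
    congr 1
    exact Finset.sum_congr rfl fun j _ => by ring
  set K : ℝ := ∑ j, ∑ k, N j k * |b k| with hKdef
  have hYsum : ∀ s t : ℝ, 0 ≤ s → s ≤ t →
      0 ≤ (∑ j, y t j - ∑ j, y s j) ∧ (∑ j, y t j - ∑ j, y s j) ≤ K * (t - s) := by
    intro s t hs hst
    have htnn := hs.trans hst
    have hyd_nn : ∀ k, 0 ≤ y t k - y s k := fun k =>
      sub_nonneg.mpr (hy_mono k (Set.mem_Ici.mpr hs) (Set.mem_Ici.mpr htnn) hst)
    constructor
    · rw [← Finset.sum_sub_distrib]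
      exact Finset.sum_nonneg fun k _ => hyd_nn k
    · set gv : Fin J → ℝ := fun k => y t k - y s k with hgv
      have hgveq : gv = N.mulVec ((1 - P.transpose).mulVec gv) := (hNmul gv).symm
      have hWk : ∀ k, ((1 - P.transpose).mulVec gv) k ≤ |b k| * (t - s) := by
        intro k
        rw [oneSubT_mulVec]
        have := hkey s t hs hst k
        simp only [hgv]
        linarith
      have hbound : ∀ jj, gv jj ≤ ∑ k, N jj k * (|b k| * (t - s)) := by
        intro jj
        calc gv jj = (N.mulVec ((1 - P.transpose).mulVec gv)) jj := by rw [← hgveq]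
        _ = ∑ k, N jj k * ((1 - P.transpose).mulVec gv) k := by
              simp [Matrix.mulVec, dotProduct]
        _ ≤ ∑ k, N jj k * (|b k| * (t - s)) :=
              Finset.sum_le_sum fun k _ => mul_le_mul_of_nonneg_left (hWk k) (hN_nn jj k)
      have hsplit : ∑ j, y t j - ∑ j, y s j = ∑ jj, gv jj := by
        rw [← Finset.sum_sub_distrib]
      rw [hsplit]
      calc ∑ jj, gv jj ≤ ∑ jj, ∑ k, N jj k * (|b k| * (t - s)) :=
            Finset.sum_le_sum fun jj _ => hbound jj
      _ = K * (t - s) := by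
            rw [hKdef, Finset.sum_mul]
            refine Finset.sum_congr rfl fun jj _ => ?_
            rw [Finset.sum_mul]
            exact Finset.sum_congr rfl fun k _ => by ring
  constructor
  · -- Lipschitz part
    refine ⟨Real.toNNReal (|c1| + K), ?_⟩
    rw [lipschitzOnWith_iff_dist_le_mul]
    have key : ∀ a c' : ℝ, 0 ≤ a → a ≤ c' →
        |dotProduct w (q c') - dotProduct w (q a)| ≤ (|c1| + K) * (c' - a) := by
      intro a c' ha hac
      obtain ⟨hG0, hGK⟩ := hYsum a c' ha hac
      have e1 : dotProduct w (q c') - dotProduct w (q a)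
          = c1 * (c' - a) + (∑ j, y c' j - ∑ j, y a j) := by
        rw [hwq c' (ha.trans hac), hwq a ha, hwx, hwx]; ring
      rw [e1]
      have h2 : |c1 * (c' - a) + (∑ j, y c' j - ∑ j, y a j)|
          ≤ |c1 * (c' - a)| + |∑ j, y c' j - ∑ j, y a j| := abs_add_le _ _
      rw [abs_mul, abs_of_nonneg (by linarith : (0:ℝ) ≤ c' - a), abs_of_nonneg hG0] at h2
      calc |c1 * (c' - a) + (∑ j, y c' j - ∑ j, y a j)|
          ≤ |c1| * (c' - a) + (∑ j, y c' j - ∑ j, y a j) := h2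
      _ ≤ |c1| * (c' - a) + K * (c' - a) := by linarith
      _ = (|c1| + K) * (c' - a) := by ring
    intro t ht s hs
    rw [Set.mem_Ici] at ht hs
    have hcoe : (|c1| + K) ≤ ((Real.toNNReal (|c1| + K)) : ℝ) := Real.le_coe_toNNReal _
    rcases le_total s t with h | h
    · rw [Real.dist_eq, Real.dist_eq]
      rw [abs_of_nonneg (by linarith : (0:ℝ) ≤ t - s)]
      calc |dotProduct w (q t) - dotProduct w (q s)|
          ≤ (|c1| + K) * (t - s) := key s t hs h
      _ ≤ (Real.toNNReal (|c1| + K) : ℝ) * (t - s) :=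
            mul_le_mul_of_nonneg_right hcoe (by linarith)
    · rw [Real.dist_eq, Real.dist_eq, abs_sub_comm]
      rw [abs_of_nonpos (by linarith : t - s ≤ 0)]
      calc |dotProduct w (q s) - dotProduct w (q t)|
          ≤ (|c1| + K) * (s - t) := key t s ht h
      _ ≤ (Real.toNNReal (|c1| + K) : ℝ) * (-(t - s)) := by
            rw [neg_sub]
            exact mul_le_mul_of_nonneg_right hcoe (by linarith)
  · -- drift part
    intro t ht d hd hqt
    have hx_deriv : HasDerivAt x b t := by
      rw [hasDerivAt_pi]
      intro j
      have hfe : (fun s => x s j) = fun s => z j + b j * s := funext fun s => hxj s j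
      rw [hfe]
      simpa using ((hasDerivAt_id t).const_mul (b j)).const_add (z j)
    set u : Fin J → ℝ := N.mulVec (d - b) with hudef
    have hqx_deriv : HasDerivAt (fun s => q s - x s) (d - b) t := hd.sub hx_deriv
    have hNder : HasDerivAt (fun s => N.mulVec (q s - x s)) u t := by
      have hcomp := ((Matrix.mulVecLin N).toContinuousLinearMap.hasFDerivAt).comp_hasDerivAt
        t hqx_deriv
      exact hcomp
    have hyloc : ∀ᶠ s in 𝓝 t, y s = N.mulVec (q s - x s) := by
      filter_upwards [isOpen_Ioi.mem_nhds ht] with s hs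
      have h1 : q s - x s = (1 - P.transpose).mulVec (y s) := by
        rw [hq_eq s (le_of_lt hs)]; abel
      rw [h1, hNmul]
    have hy_deriv : HasDerivAt y u t := hNder.congr_of_eventuallyEq hyloc
    have hyj : ∀ j, HasDerivAt (fun s => y s j) (u j) t := fun j => hasDerivAt_pi.mp hy_deriv j
    have hqj : ∀ j, HasDerivAt (fun s => q s j) (d j) t := fun j => hasDerivAt_pi.mp hd j
    have hdecomp : (1 - P.transpose).mulVec u = d - b := by rw [hudef, hmulN]
    have hd_eq : ∀ j, d j = b j + (u j - ∑ k, P k j * u k) := by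
      intro j
      have h1 := congrFun hdecomp j
      rw [oneSubT_mulVec] at h1
      have h2 : (d - b) j = d j - b j := rfl
      rw [h2] at h1
      linarith
    have hu_nn : ∀ j, 0 ≤ u j := by
      intro j
      have hFder : HasDerivAt (F j) (u j) t := by
        refine (hyj j).congr_of_eventuallyEq ?_
        filter_upwards [isOpen_Ioi.mem_nhds ht] with s hs
        exact hFy j s (le_of_lt hs)
      have hslope := hasDerivAt_iff_tendsto_slope.mp hFder
      have h2 : Tendsto (slope (F j) t) (𝓝[>] t) (𝓝 (u j)) :=
        hslope.mono_left (nhdsWithin_mono _ fun s hs =>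
          Set.mem_compl_singleton_iff.mpr (ne_of_gt hs))
      refine ge_of_tendsto h2 ?_
      filter_upwards [self_mem_nhdsWithin] with s hs
      rw [slope_def_field]
      have hts : t < s := hs
      exact div_nonneg (sub_nonneg.mpr ((F j).mono hts.le)) (by linarith)
    have hu_zero : ∀ j, q t j ≠ 0 → u j = 0 := by
      intro j hqj0
      have hqt_pos : 0 < q t j := lt_of_le_of_ne (hq_nn t ht.le j) (Ne.symm hqj0)
      have hcont : ContinuousAt (fun s => q s j) t := (hqj j).continuousAt
      have hev2 : ∀ᶠ s in 𝓝 t, 0 < q s j ∧ 0 < s := by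
        filter_upwards [hcont.eventually_mem (isOpen_Ioi.mem_nhds hqt_pos),
          isOpen_Ioi.mem_nhds ht] with s h1 h2
        exact ⟨h1, h2⟩
      obtain ⟨δ, hδ0, hδ⟩ := Metric.eventually_nhds_iff.mp hev2
      set ε := min δ t with hεdef
      have hε0 : 0 < ε := lt_min hδ0 ht
      have hεδ : ε ≤ δ := min_le_left _ _
      have hεt : ε ≤ t := min_le_right _ _
      have hIoo : (F j).measure (Set.Ioo (t - ε) (t + ε)) = 0 := by
        refine measure_mono_null (fun p hp => ?_) (hnull j (t + ε) (by linarith))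
        have hdist : dist p t < δ := by
          rw [Real.dist_eq, abs_lt]
          constructor
          · linarith [hp.1]
          · linarith [hp.2]
        obtain ⟨h1, h2⟩ := hδ hdist
        exact ⟨ne_of_gt h1, ⟨le_of_lt h2, le_of_lt hp.2⟩⟩
      have hconst : ∀ᶠ s in 𝓝 t, y s j = y t j := by
        have hball : Set.Ioo (t - ε) (t + ε) ∈ 𝓝 t := Ioo_mem_nhds (by linarith) (by linarith)
        filter_upwards [hball] with s hsm
        have hs_pos : 0 < s := by
          have := hsm.1; linarith
        have hFeq : F j s = F j t := by
          rcases le_total s t with hle | hle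
          · have hsub : Set.Ioc s t ⊆ Set.Ioo (t - ε) (t + ε) := by
              intro p hp
              exact ⟨lt_of_lt_of_le hsm.1 hp.1.le, lt_of_le_of_lt hp.2 (by linarith)⟩
            have h0 : (F j).measure (Set.Ioc s t) = 0 := measure_mono_null hsub hIoo
            rw [StieltjesFunction.measure_Ioc, ENNReal.ofReal_eq_zero] at h0
            have := (F j).mono hle
            linarith
          · have hsub : Set.Ioc t s ⊆ Set.Ioo (t - ε) (t + ε) := by
              intro p hp
              exact ⟨by linarith [hp.1], lt_of_le_of_lt hp.2 hsm.2⟩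
            have h0 : (F j).measure (Set.Ioc t s) = 0 := measure_mono_null hsub hIoo
            rw [StieltjesFunction.measure_Ioc, ENNReal.ofReal_eq_zero] at h0
            have := (F j).mono hle
            linarith
        rw [← hFy j s hs_pos.le, ← hFy j t ht.le, hFeq]
      have hzero : HasDerivAt (fun s => y s j) 0 t :=
        (hasDerivAt_const t (y t j)).congr_of_eventuallyEq hconst
      exact (hyj j).unique hzero
    have hd_zero : ∀ j, q t j = 0 → d j = 0 := by
      intro j hq0
      have hmin : IsLocalMin (fun s => q s j) t := by
        have : ∀ᶠ s in 𝓝 t, q t j ≤ q s j := by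
          filter_upwards [isOpen_Ioi.mem_nhds ht] with s hs
          rw [hq0]
          exact hq_nn s (le_of_lt hs) j
        exact this
      exact hmin.hasDerivAt_eq_zero (hqj j)
    -- restricted matrix
    set P' : Matrix (Fin J) (Fin J) ℝ :=
      Matrix.of (fun i k => if q t i = 0 ∧ q t k = 0 then P i k else 0) with hP'def
    have hP'nn : ∀ i k, 0 ≤ P' i k := by
      intro i k
      rw [hP'def, Matrix.of_apply]
      split_ifs with hif
      · exact hPnn i k
      · exact le_rfl
    have hP'le : ∀ i k, P' i k ≤ P i k := by
      intro i k
      rw [hP'def, Matrix.of_apply]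
      split_ifs with hif
      · exact le_rfl
      · exact hPnn i k
    have hP'n : ‖P' ^ n‖ < 1 := by
      refine lt_of_le_of_lt (norm_le_of_entry_le _ _ fun i k => ?_) hPn
      rw [abs_of_nonneg (pow_entry_nonneg P' hP'nn n i k)]
      exact pow_entry_le_pow P' P hP'nn hP'le n i k
    obtain ⟨hdetP', hNP'⟩ := neumann P' hP'nn n hP'n
    have h1PT' : (1 - P'.transpose) = (1 - P').transpose := by
      rw [Matrix.transpose_sub, Matrix.transpose_one]
    have hdetPT' : IsUnit (1 - P'.transpose).det := by
      rw [h1PT', Matrix.det_transpose]; exact hdetP'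
    set N' : Matrix (Fin J) (Fin J) ℝ := (1 - P'.transpose)⁻¹ with hN'def
    have hN'_nn : ∀ i k, 0 ≤ N' i k := by
      intro i k
      rw [hN'def, h1PT', ← Matrix.transpose_nonsing_inv]
      exact hNP' k i
    have hN'mul : ∀ vv : Fin J → ℝ, N'.mulVec ((1 - P'.transpose).mulVec vv) = vv := by
      intro vv
      rw [Matrix.mulVec_mulVec, Matrix.nonsing_inv_mul _ hdetPT', Matrix.one_mulVec]
    set hvec : Fin J → ℝ := fun j => if q t j = 0 then v j - u j else 0 with hhdef
    have hh_ge : ∀ j, 0 ≤ ((1 - P'.transpose).mulVec hvec) j := by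
      intro j
      rw [oneSubT_mulVec]
      by_cases hj : q t j = 0
      · have husum : u j = -b j + ∑ k, P k j * u k := by
          have h1 := hd_eq j
          have h2 := hd_zero j hj
          linarith
        have hvsum : v j = -b j + ∑ k, P k j * v k := by
          have := hveq j; linarith
        have hsum_eq : ∑ k, P' k j * hvec k
            = ∑ k, (if q t k = 0 then P k j * (v k - u k) else 0) := by
          refine Finset.sum_congr rfl fun k _ => ?_
          rw [hP'def, hhdef, Matrix.of_apply]
          by_cases hk : q t k = 0 <;> simp [hk, hj]
        have hhj : hvec j = v j - u j := by rw [hhdef]; simp [hj]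
        rw [hhj, hsum_eq]
        have hterm : ∀ k, (if q t k = 0 then P k j * (v k - u k) else 0) ≤ P k j * (v k - u k) := by
          intro k
          by_cases hk : q t k = 0
          · simp [hk]
          · simp only [hk, if_false]
            rw [hu_zero k hk, sub_zero]
            exact mul_nonneg (hPnn k j) (hv_pos k).le
        have hsum_le : ∑ k, (if q t k = 0 then P k j * (v k - u k) else 0)
            ≤ ∑ k, P k j * (v k - u k) := Finset.sum_le_sum fun k _ => hterm k
        have hdiff : ∑ k, P k j * (v k - u k) = ∑ k, P k j * v k - ∑ k, P k j * u k := by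
          rw [← Finset.sum_sub_distrib]
          exact Finset.sum_congr rfl fun k _ => by ring
        linarith
      · have hhj : hvec j = 0 := by rw [hhdef]; simp [hj]
        have hsum0 : ∑ k, P' k j * hvec k = 0 := by
          refine Finset.sum_eq_zero fun k _ => ?_
          rw [hP'def, Matrix.of_apply]
          simp [hj]
        rw [hhj, hsum0]
        norm_num
    have hh_nn : ∀ j, 0 ≤ hvec j := by
      intro j
      have heq : hvec = N'.mulVec ((1 - P'.transpose).mulVec hvec) := (hN'mul hvec).symm
      have hentry : (N'.mulVec ((1 - P'.transpose).mulVec hvec)) j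
          = ∑ k, N' j k * ((1 - P'.transpose).mulVec hvec) k := by
        simp [Matrix.mulVec, dotProduct]
      calc (0:ℝ) ≤ ∑ k, N' j k * ((1 - P'.transpose).mulVec hvec) k :=
            Finset.sum_nonneg fun k _ => mul_nonneg (hN'_nn j k) (hh_ge k)
      _ = (N'.mulVec ((1 - P'.transpose).mulVec hvec)) j := hentry.symm
      _ = hvec j := by rw [← heq]
    have hu_le_sum : ∑ j, u j ≤ ∑ j, (if q t j = 0 then v j else 0) := by
      refine Finset.sum_le_sum fun j _ => ?_
      by_cases hj : q t j = 0
      · have h1 := hh_nn j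
        rw [hhdef] at h1
        simp only [hj, if_true] at h1
        simp only [hj, if_true]
        linarith
      · simp only [hj, if_false]
        rw [hu_zero j hj]
    obtain ⟨j0, hj0⟩ : ∃ j0, q t j0 ≠ 0 := by
      by_contra hcon
      push_neg at hcon
      exact hqt (funext fun j => hcon j)
    have hsum_ite : ∑ j, (if q t j = 0 then v j else 0) ≤ (∑ j, v j) - v j0 := by
      have hsplit : ∑ j, (if q t j = 0 then v j else 0)
          = ∑ j, v j - ∑ j, (if q t j = 0 then 0 else v j) := by
        rw [← Finset.sum_sub_distrib]
        refine Finset.sum_congr rfl fun j _ => ?_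
        by_cases hj : q t j = 0 <;> simp [hj]
      have hone : v j0 ≤ ∑ j, (if q t j = 0 then 0 else v j) := by
        have h1 : (if q t j0 = 0 then 0 else v j0) ≤ ∑ j, (if q t j = 0 then 0 else v j) := by
          refine Finset.single_le_sum (f := fun j => if q t j = 0 then 0 else v j)
            (fun j _ => ?_) (Finset.mem_univ j0)
          by_cases hj : q t j = 0 <;> simp [hj, (hv_pos j).le]
        rw [if_neg hj0] at h1
        exact h1
      rw [hsplit]
      linarith
    have hd2 : d = b + (1 - P.transpose).mulVec u := by
      rw [hdecomp]
      funext j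
      simp
    have hwd : dotProduct w d = dotProduct w b + ∑ j, u j := by
      rw [hd2, dotProduct_add, hdot1]
    have hwb : dotProduct w b = -∑ j, v j := by
      have h1 : dotProduct w b
          = -(dotProduct w ((1 - P.transpose).mulVec v)) := by
        rw [hbvec]
        simp [dotProduct, mul_neg, Finset.sum_neg_distrib]
      rw [h1, hdot1]
    have hiInf_eq : (⨅ j, μ j * (1 - lam j / μ j)) = ⨅ j, v j := by
      have hterm : ∀ j', μ j' * (1 - lam j' / μ j') = v j' := by
        intro j'
        rw [hvdef]
        have hne : μ j' ≠ 0 := (hμ j').ne'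
        field_simp
      exact congrArg _ (funext hterm)
    have hinf_le : (⨅ j, v j) ≤ v j0 := ciInf_le (Finite.bddBelow_range _) j0
    rw [hiInf_eq, hwd, hwb]
    linarith

end
end

section
/- Suppose Φ is a geometric Lyapunov function for κ with geometric drift size γ ∈ (0,1) and exception parameter K ≥ 0, suppose there is a constant φ₀ ≥ 0 such that ∫ Φ(y) κ(x, dy) ≤ φ₀ · Φ(x) for every x ∈ S, and suppose π is a stationary probability measure for κ. Then ∫ Φ dπ ≤ φ₀ · K / (1 − γ). -/
open MeasureTheory ProbabilityTheory ENNReal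

noncomputable section

/-- A probability measure `π` is stationary for the Markov kernel `κ` if
`π.bind κ = π`. -/
def IsStationaryMeasure {S : Type*} [MeasurableSpace S]
    (κ : Kernel S S) (π : Measure S) : Prop :=
  π.bind (fun x => κ x) = π

/-- `Φ` is a geometric Lyapunov function for `κ` with geometric drift size `γ`
and exception parameter `K`: `∫ Φ dκ(x,·) ≤ γ Φ(x)` whenever `Φ(x) > K`. -/
def IsGeomLyapunov {S : Type*} [MeasurableSpace S]
    (κ : Kernel S S) (Φ : S → ℝ≥0∞) (γ K : ℝ≥0∞) : Prop :=
  ∀ x, K < Φ x → ∫⁻ y, Φ y ∂(κ x) ≤ γ * Φ x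

/-- Theorem 5: if `Φ` is a geometric Lyapunov function with drift size `γ ∈ (0,1)`
and exception parameter `K`, and `∫ Φ dκ(x,·) ≤ φ₀ Φ(x)` for all `x`, then any
stationary distribution `π` satisfies `∫ Φ dπ ≤ φ₀ K / (1 − γ)`. -/
theorem stationary_lyapunov_bound {S : Type*} [MeasurableSpace S]
    (κ : Kernel S S) [IsMarkovKernel κ]
    (Φ : S → ℝ≥0∞) (hΦmeas : Measurable Φ) (hΦfin : ∀ x, Φ x ≠ ∞)
    (γ K φ₀ : ℝ≥0∞) (hγ0 : 0 < γ) (hγ1 : γ < 1) (hK : K ≠ ∞) (hφ₀ : φ₀ ≠ ∞)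
    (hgeom : IsGeomLyapunov κ Φ γ K)
    (hφ : ∀ x, ∫⁻ y, Φ y ∂(κ x) ≤ φ₀ * Φ x)
    (π : Measure S) [IsProbabilityMeasure π]
    (hπ : IsStationaryMeasure κ π) :
    ∫⁻ x, Φ x ∂π ≤ φ₀ * K / (1 - γ) := by
  set c : ℝ≥0∞ := φ₀ * K with hc
  -- the everywhere drift bound
  have hdrift : ∀ x, ∫⁻ y, Φ y ∂(κ x) ≤ γ * Φ x + c := by
    intro x
    rcases lt_or_ge K (Φ x) with h | h
    · exact (hgeom x h).trans le_self_add
    · calc ∫⁻ y, Φ y ∂(κ x) ≤ φ₀ * Φ x := hφ x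
        _ ≤ c := mul_le_mul_right h φ₀
        _ ≤ γ * Φ x + c := le_add_self
  -- stationarity at the level of lintegrals
  have hbind : ∀ g : S → ℝ≥0∞, Measurable g →
      ∫⁻ x, g x ∂π = ∫⁻ x, ∫⁻ y, g y ∂(κ x) ∂π := by
    intro g hg
    conv_lhs => rw [← hπ]
    exact Measure.lintegral_bind κ.measurable.aemeasurable hg.aemeasurable
  -- main claim for each truncation level m
  have key : ∀ m : ℕ, ∫⁻ x, min (Φ x) m ∂π ≤ c / (1 - γ) := by
    intro m
    set g : ℕ → S → ℝ≥0∞ := fun n x => min (γ ^ n * Φ x) m with hgdef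
    have hgmeas : ∀ n, Measurable (g n) := fun n =>
      (hΦmeas.const_mul _).min measurable_const
    have hmin_add : ∀ a d : ℝ≥0∞, min (a + d) (m : ℝ≥0∞) ≤ min a m + d := by
      intro a d
      rcases le_total a (m : ℝ≥0∞) with h | h
      · calc min (a + d) (m : ℝ≥0∞) ≤ a + d := min_le_left _ _
          _ = min a m + d := by rw [min_eq_left h]
      · calc min (a + d) (m : ℝ≥0∞) ≤ m := min_le_right _ _
          _ = min a m := (min_eq_right h).symm
          _ ≤ min a m + d := le_self_add
    have hstep : ∀ n, ∫⁻ x, g n x ∂π ≤ ∫⁻ x, g (n + 1) x ∂π + γ ^ n * c := by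
      intro n
      rw [hbind (g n) (hgmeas n)]
      have hinner : ∀ x, ∫⁻ y, g n y ∂(κ x) ≤ g (n + 1) x + γ ^ n * c := by
        intro x
        have h1 : ∫⁻ y, g n y ∂(κ x) ≤ min (γ ^ n * ∫⁻ y, Φ y ∂(κ x)) m := by
          refine le_min ?_ ?_
          · rw [← lintegral_const_mul _ hΦmeas]
            exact lintegral_mono fun y => min_le_left _ _
          · calc ∫⁻ y, g n y ∂(κ x) ≤ ∫⁻ _, (m : ℝ≥0∞) ∂(κ x) :=
                lintegral_mono fun y => min_le_right _ _
              _ = m := by simp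
        refine h1.trans ?_
        have h2 : γ ^ n * ∫⁻ y, Φ y ∂(κ x) ≤ γ ^ (n + 1) * Φ x + γ ^ n * c := by
          calc γ ^ n * ∫⁻ y, Φ y ∂(κ x) ≤ γ ^ n * (γ * Φ x + c) :=
              mul_le_mul_right (hdrift x) _
            _ = γ ^ (n + 1) * Φ x + γ ^ n * c := by ring
        calc min (γ ^ n * ∫⁻ y, Φ y ∂(κ x)) (m : ℝ≥0∞)
            ≤ min (γ ^ (n + 1) * Φ x + γ ^ n * c) (m : ℝ≥0∞) :=
              min_le_min h2 le_rfl
          _ ≤ min (γ ^ (n + 1) * Φ x) m + γ ^ n * c := hmin_add _ _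
      calc ∫⁻ x, ∫⁻ y, g n y ∂(κ x) ∂π
          ≤ ∫⁻ x, (g (n + 1) x + γ ^ n * c) ∂π := lintegral_mono hinner
        _ = ∫⁻ x, g (n + 1) x ∂π + γ ^ n * c := by
            rw [lintegral_add_right _ measurable_const, lintegral_const,
              measure_univ, mul_one]
    have hiter : ∀ n, ∫⁻ x, g 0 x ∂π ≤
        ∫⁻ x, g n x ∂π + c * ∑ i ∈ Finset.range n, γ ^ i := by
      intro n
      induction n with
      | zero => simp
      | succ n ih =>
        refine ih.trans ?_
        calc ∫⁻ x, g n x ∂π + c * ∑ i ∈ Finset.range n, γ ^ i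
            ≤ (∫⁻ x, g (n + 1) x ∂π + γ ^ n * c) + c * ∑ i ∈ Finset.range n, γ ^ i :=
              add_le_add_left (hstep n) _
          _ = ∫⁻ x, g (n + 1) x ∂π + c * ∑ i ∈ Finset.range (n + 1), γ ^ i := by
              rw [Finset.sum_range_succ]; ring
    have hbd : ∀ n, ∫⁻ x, g 0 x ∂π ≤ ∫⁻ x, g n x ∂π + c / (1 - γ) := by
      intro n
      refine (hiter n).trans (add_le_add_right ?_ _)
      rw [ENNReal.div_eq_inv_mul, mul_comm]
      refine mul_le_mul_left ?_ c
      calc (∑ i ∈ Finset.range n, γ ^ i) ≤ ∑' i : ℕ, γ ^ i := ENNReal.sum_le_tsum _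
        _ = (1 - γ)⁻¹ := ENNReal.tsum_geometric γ
    -- the limit of ∫ g n is 0
    have hptlim : ∀ x, Filter.Tendsto (fun n => g n x) Filter.atTop (nhds 0) := by
      intro x
      have hpow : Filter.Tendsto (fun n => γ ^ n) Filter.atTop (nhds 0) :=
        ENNReal.tendsto_pow_atTop_nhds_zero_of_lt_one hγ1
      have hmul : Filter.Tendsto (fun n => γ ^ n * Φ x) Filter.atTop (nhds 0) := by
        have := ENNReal.Tendsto.mul_const hpow (Or.inr (hΦfin x))
        simpa using this
      refine tendsto_of_tendsto_of_tendsto_of_le_of_le tendsto_const_nhds hmul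
        (fun n => zero_le) (fun n => min_le_left _ _)
    have hlim : Filter.Tendsto (fun n => ∫⁻ x, g n x ∂π) Filter.atTop (nhds 0) := by
      have h0 : (0 : ℝ≥0∞) = ∫⁻ _, (0 : ℝ≥0∞) ∂π := by simp
      rw [h0]
      exact tendsto_lintegral_of_dominated_convergence (fun _ => (m : ℝ≥0∞))
        (fun n => hgmeas n)
        (fun n => ae_of_all _ fun x => min_le_right _ _)
        (by simp) (ae_of_all _ hptlim)
    have hfinal : ∫⁻ x, g 0 x ∂π ≤ c / (1 - γ) := by
      have : Filter.Tendsto (fun n => ∫⁻ x, g n x ∂π + c / (1 - γ))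
          Filter.atTop (nhds (c / (1 - γ))) := by
        have := hlim.add (tendsto_const_nhds (x := c / (1 - γ)))
        simpa using this
      exact ge_of_tendsto' this hbd
    calc ∫⁻ x, min (Φ x) m ∂π = ∫⁻ x, g 0 x ∂π := by simp [hgdef]
      _ ≤ c / (1 - γ) := hfinal
  -- monotone convergence in m
  have hmono : Monotone (fun (n : ℕ) (x : S) => min (Φ x) n) := by
    intro i j hij x
    exact min_le_min le_rfl (by exact_mod_cast hij)
  have hsup : ∀ x, (⨆ n : ℕ, min (Φ x) n) = Φ x := by
    intro x
    refine le_antisymm (iSup_le fun n => min_le_left _ _) ?_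
    obtain ⟨n, hn⟩ := ENNReal.exists_nat_gt (hΦfin x)
    exact le_iSup_of_le n (le_min le_rfl hn.le)
  calc ∫⁻ x, Φ x ∂π = ∫⁻ x, ⨆ n : ℕ, min (Φ x) n ∂π := by
        simp_rw [hsup]
    _ = ⨆ n : ℕ, ∫⁻ x, min (Φ x) n ∂π :=
        lintegral_iSup (fun n => hΦmeas.min measurable_const) hmono
    _ ≤ c / (1 - γ) := iSup_le key

end
end

section
/- Let Φ : S → [0,∞) be measurable, suppose Φ is integrable with respect to κ(x, ·) for every x ∈ S and that x ↦ ∫ Φ(y) κ(x, dy) is measurable, suppose there is a constant c ≥ 0 such that Φ(x) − ∫ Φ(y) κ(x, dy) ≥ −c for all x ∈ S, and let π be a stationary probability measure for κ. Then ∫_S ( Φ(x) − ∫ Φ(y) κ(x, dy) ) dπ(x) ≤ 0, where the outer integral is well defined in (−∞, +∞] since the integrand is bounded below by −c. -/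
open MeasureTheory ProbabilityTheory ENNReal
open Filter

noncomputable section

/-- If the drift `x ↦ Φ(x) − ∫ Φ dκ(x,·)` is bounded below by `−c`, then its
integral against any stationary distribution `π` is at most `0`.  Since the
integrand is bounded below by `−c`, the integral is well defined in `(−∞, ∞]`;
the conclusion is stated equivalently as
`∫⁻ (Φ(x) − ∫ Φ dκ(x,·) + c)⁺ dπ ≤ c`. -/
theorem stationary_drift_integral_nonpos {S : Type*} [MeasurableSpace S]
    (κ : Kernel S S) [IsMarkovKernel κ]
    (Φ : S → ℝ) (hΦmeas : Measurable Φ) (hΦ0 : ∀ x, 0 ≤ Φ x)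
    (hint : ∀ x, Integrable Φ (κ x))
    (hmeas : Measurable fun x => ∫ y, Φ y ∂(κ x))
    (c : ℝ) (hc : 0 ≤ c)
    (hlb : ∀ x, -c ≤ Φ x - ∫ y, Φ y ∂(κ x))
    (π : Measure S) [IsProbabilityMeasure π]
    (hπ : IsStationaryMeasure κ π) :
    ∫⁻ x, ENNReal.ofReal (Φ x - (∫ y, Φ y ∂(κ x)) + c) ∂π ≤ ENNReal.ofReal c := by
  set F : S → ℝ≥0∞ := fun x => ENNReal.ofReal (Φ x) with hF
  have hFmeas : Measurable F := hΦmeas.ennreal_ofReal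
  have hFne : ∀ x, F x ≠ ∞ := fun x => ofReal_ne_top
  set c' : ℝ≥0∞ := ENNReal.ofReal c with hc'
  set Fn : ℕ → S → ℝ≥0∞ := fun n x => min (F x) n with hFn
  have hFnmeas : ∀ n, Measurable (Fn n) := fun n => hFmeas.min measurable_const
  set G : S → ℝ≥0∞ := fun x => ∫⁻ y, F y ∂(κ x) with hG
  set Gn : ℕ → S → ℝ≥0∞ := fun n x => ∫⁻ y, Fn n y ∂(κ x) with hGn
  have hGnmeas : ∀ n, Measurable (Gn n) := by
    intro n
    exact Measurable.lintegral_kernel_prod_right ((hFnmeas n).comp measurable_snd)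
  -- G x = ofReal (∫ Φ dκ x)
  have hGeq : ∀ x, G x = ENNReal.ofReal (∫ y, Φ y ∂(κ x)) := by
    intro x
    rw [ofReal_integral_eq_lintegral_ofReal (hint x) (Filter.Eventually.of_forall hΦ0)]
  -- drift bound in ℝ≥0∞ : G x ≤ F x + c'
  have hGle : ∀ x, G x ≤ F x + c' := by
    intro x
    rw [hGeq x, ← ENNReal.ofReal_add (hΦ0 x) hc]
    exact ENNReal.ofReal_le_ofReal (by linarith [hlb x])
  have hGnle : ∀ n x, Gn n x ≤ Fn n x + c' := by
    intro n x
    have h1 : Gn n x ≤ G x := lintegral_mono fun y => min_le_left _ _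
    have h2 : Gn n x ≤ n := by
      calc Gn n x ≤ ∫⁻ _, (n : ℝ≥0∞) ∂(κ x) := lintegral_mono fun y => min_le_right _ _
        _ = n := by simp
    rcases le_total (F x) (n : ℝ≥0∞) with h | h
    · simpa [hFn, min_eq_left h] using h1.trans (hGle x)
    · calc Gn n x ≤ n := h2
        _ ≤ min (F x) n + c' := by simp [min_eq_right h]
  -- the integrand rewritten
  have hinteq : ∀ x, ENNReal.ofReal (Φ x - (∫ y, Φ y ∂(κ x)) + c) = F x + c' - G x := by
    intro x
    have hI0 : 0 ≤ ∫ y, Φ y ∂(κ x) := integral_nonneg hΦ0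
    have : Φ x - (∫ y, Φ y ∂(κ x)) + c = (Φ x + c) - ∫ y, Φ y ∂(κ x) := by ring
    rw [this, ENNReal.ofReal_sub _ hI0, ENNReal.ofReal_add (hΦ0 x) hc, hGeq x]
  -- pointwise : F x + c' - G x ≤ liminf (Fn n x + c' - Gn n x)
  have hptwise : ∀ x, F x + c' - G x ≤
      liminf (fun n => Fn n x + c' - Gn n x) atTop := by
    intro x
    refine le_trans ?_ (liminf_le_liminf (Eventually.of_forall fun n =>
      tsub_le_tsub (le_refl (Fn n x + c')) (lintegral_mono fun y => min_le_left _ _)))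
    -- reduce to liminf (Fn n x + c' - G x)
    have hmono : Monotone fun n : ℕ => Fn n x + c' - G x := by
      intro m n hmn
      exact tsub_le_tsub (add_le_add_left (min_le_min le_rfl (by exact_mod_cast hmn)) _) le_rfl
    have hlim : Tendsto (fun n : ℕ => Fn n x + c' - G x) atTop
        (nhds (F x + c' - G x)) := by
      have hFnlim : Tendsto (fun n : ℕ => Fn n x) atTop (nhds (F x)) := by
        obtain ⟨N, hN⟩ := ENNReal.exists_nat_gt (hFne x)
        refine tendsto_atTop_of_eventually_const (i₀ := N) fun n hn => ?_
        exact min_eq_left (hN.le.trans (by exact_mod_cast hn))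
      have hGne : G x ≠ ⊤ :=
        (lt_of_le_of_lt (hGle x) (ENNReal.add_lt_top.mpr ⟨(hFne x).lt_top, ENNReal.ofReal_lt_top⟩)).ne
      exact ENNReal.Tendsto.sub (hFnlim.add tendsto_const_nhds) tendsto_const_nhds
        (Or.inr hGne)
    rw [hlim.liminf_eq]
  calc ∫⁻ x, ENNReal.ofReal (Φ x - (∫ y, Φ y ∂(κ x)) + c) ∂π
      ≤ ∫⁻ x, liminf (fun n => Fn n x + c' - Gn n x) atTop ∂π := by
        refine lintegral_mono fun x => ?_
        rw [hinteq x]; exact hptwise x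
    _ ≤ liminf (fun n => ∫⁻ x, Fn n x + c' - Gn n x ∂π) atTop :=
        lintegral_liminf_le fun n => ((hFnmeas n).add measurable_const).sub (hGnmeas n)
    _ ≤ c' := by
        refine liminf_le_of_le (by isBoundedDefault) ?_
        intro b hb
        obtain ⟨n, hn⟩ := hb.exists
        refine hn.trans ?_
        have hGnint : ∫⁻ x, Gn n x ∂π = ∫⁻ x, Fn n x ∂π := by
          rw [hGn]
          rw [← Measure.lintegral_bind (κ.measurable.aemeasurable) (hFnmeas n).aemeasurable, hπ]
        have hfin : ∫⁻ x, Fn n x ∂π ≠ ∞ := by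
          refine ne_of_lt (lt_of_le_of_lt ?_ (by simp : (n : ℝ≥0∞) * π Set.univ < ∞))
          calc ∫⁻ x, Fn n x ∂π ≤ ∫⁻ _, (n : ℝ≥0∞) ∂π := lintegral_mono fun x => min_le_right _ _
            _ = (n : ℝ≥0∞) * π Set.univ := by simp [lintegral_const]
        rw [lintegral_sub (hGnmeas n) (by rw [hGnint]; exact hfin)
          (Eventually.of_forall fun x => hGnle n x),
          lintegral_add_right _ measurable_const, hGnint, lintegral_const]
        simp only [measure_univ, mul_one]
        rw [ENNReal.add_sub_cancel_left hfin]


end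
end

section
/- Suppose Φ satisfies the drift condition with parameters γ > 0 and K ≥ 0, let θ > 0, and let L₂ ≥ 0 be a constant such that ∫ (Φ(y) − Φ(x))² · exp(θ·(Φ(y) − Φ(x))⁺) κ(x, dy) ≤ L₂ for every x ∈ S, with θ·L₂ ≤ γ. Then for every x with Φ(x) > K, ∫ exp(θ·Φ(y)) κ(x, dy) ≤ (1 − γθ/2) · exp(θ·Φ(x)); that is, the function exp(θ·Φ) is a geometric Lyapunov function for κ with geometric drift size 1 − γθ/2 and exception parameter exp(θK). -/
open MeasureTheory ProbabilityTheory ENNReal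

noncomputable section

lemma exp_le_quad_neg {t : ℝ} (ht : t ≤ 0) : Real.exp t ≤ 1 + t + t^2/2 := by
  have H : AntitoneOn (fun t : ℝ => 1 + t + t^2/2 - Real.exp t) (Set.Iic 0) := by
    apply antitoneOn_of_deriv_nonpos (convex_Iic 0)
    · fun_prop
    · intro s hs
      apply DifferentiableAt.differentiableWithinAt
      fun_prop
    · intro s hs
      have hd : HasDerivAt (fun t : ℝ => 1 + t + t^2/2 - Real.exp t)
          ((0 + 1) + (2 * s ^ 1) / 2 - Real.exp s) s := by
        exact (((hasDerivAt_const s (1:ℝ)).add (hasDerivAt_id s)).add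
          ((hasDerivAt_pow 2 s).div_const 2)).sub (Real.hasDerivAt_exp s)
      rw [hd.deriv]
      have := Real.add_one_le_exp s
      nlinarith
  have h0 : (fun t : ℝ => 1 + t + t^2/2 - Real.exp t) 0 ≤ _ :=
    H (Set.mem_Iic.2 ht) (Set.mem_Iic.2 le_rfl) ht
  simp [Real.exp_zero] at h0
  nlinarith [h0]

lemma cubic_le_exp_neg {t : ℝ} (ht : t ≤ 0) : 1 + t + t^2/2 + t^3/6 ≤ Real.exp t := by
  have H : AntitoneOn (fun t : ℝ => Real.exp t - (1 + t + t^2/2 + t^3/6)) (Set.Iic 0) := by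
    apply antitoneOn_of_deriv_nonpos (convex_Iic 0)
    · fun_prop
    · intro s hs
      apply DifferentiableAt.differentiableWithinAt
      fun_prop
    · intro s hs
      have hd : HasDerivAt (fun t : ℝ => Real.exp t - (1 + t + t^2/2 + t^3/6))
          (Real.exp s - (((0 + 1) + (2 * s ^ 1) / 2) + (3 * s ^ 2) / 6)) s := by
        exact (Real.hasDerivAt_exp s).sub
          ((((hasDerivAt_const s (1:ℝ)).add (hasDerivAt_id s)).add
            ((hasDerivAt_pow 2 s).div_const 2)).add ((hasDerivAt_pow 3 s).div_const 6))
      rw [hd.deriv]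
      have hs' : s ≤ 0 := le_of_lt (by simpa using hs)
      have := exp_le_quad_neg hs'
      nlinarith
  have h0 : (fun t : ℝ => Real.exp t - (1 + t + t^2/2 + t^3/6)) 0 ≤ _ :=
    H (Set.mem_Iic.2 ht) (Set.mem_Iic.2 le_rfl) ht
  simp [Real.exp_zero] at h0
  nlinarith [h0]

lemma exp_le_quad (a : ℝ) : Real.exp a ≤ 1 + a + a^2/2 * Real.exp (max a 0) := by
  rcases le_total a 0 with h | h
  · rw [max_eq_right h, Real.exp_zero]
    have := exp_le_quad_neg h
    nlinarith
  · rw [max_eq_left h]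
    rcases le_total 2 (a^2) with h2 | h2
    · nlinarith [Real.one_le_exp h, Real.exp_pos a]
    · have hF := cubic_le_exp_neg (neg_nonpos.2 h)
      have hEF : Real.exp a * Real.exp (-a) = 1 := by
        rw [← Real.exp_add]; simp
      have hE : 0 < Real.exp a := Real.exp_pos a
      have hEP : Real.exp a * (1 + -a + (-a)^2/2 + (-a)^3/6) ≤ 1 := by
        nlinarith [mul_le_mul_of_nonneg_left hF hE.le]
      have ha2 : a ≤ 2 := by nlinarith
      have hterm : 0 ≤ Real.exp a * a^3 * (2 - a) :=
        mul_nonneg (mul_nonneg hE.le (pow_nonneg h 3)) (by linarith)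
      nlinarith [mul_le_mul_of_nonneg_left hEP (by linarith : (0:ℝ) ≤ 1 + a)]


theorem exp_geometric_lyapunov' {S : Type*} [MeasurableSpace S]
    (κ : Kernel S S) [IsMarkovKernel κ]
    (Φ : S → ℝ) (hΦmeas : Measurable Φ) (hΦ0 : ∀ x, 0 ≤ Φ x)
    (γ K : ℝ) (hγ : 0 < γ) (hK : 0 ≤ K)
    (hint : ∀ x, Integrable Φ (κ x))
    (hdr : ∀ x, K < Φ x → (∫ y, Φ y ∂(κ x)) - Φ x ≤ -γ)
    (θ : ℝ) (hθ : 0 < θ)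
    (L₂ : ℝ) (hL₂0 : 0 ≤ L₂)
    (hL₂ : ∀ x, ∫⁻ y, ENNReal.ofReal
        ((Φ y - Φ x) ^ 2 * Real.exp (θ * max (Φ y - Φ x) 0)) ∂(κ x)
      ≤ ENNReal.ofReal L₂)
    (hθL₂ : θ * L₂ ≤ γ) :
    ∀ x, K < Φ x →
      ∫⁻ y, ENNReal.ofReal (Real.exp (θ * Φ y)) ∂(κ x)
        ≤ ENNReal.ofReal ((1 - γ * θ / 2) * Real.exp (θ * Φ x)) := by
  intro x hx
  set μ := κ x with hμ
  set g : S → ℝ := fun y => (Φ y - Φ x) ^ 2 * Real.exp (θ * max (Φ y - Φ x) 0) with hg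
  have hgmeas : Measurable g := by fun_prop
  have hg0 : ∀ y, 0 ≤ g y := fun y =>
    mul_nonneg (sq_nonneg _) (Real.exp_pos _).le
  have hgint : Integrable g μ := by
    refine ⟨hgmeas.aestronglyMeasurable, ?_⟩
    rw [hasFiniteIntegral_iff_ofReal (Filter.Eventually.of_forall hg0)]
    exact lt_of_le_of_lt (hL₂ x) ENNReal.ofReal_lt_top
  set h : S → ℝ := fun y => 1 + θ * (Φ y - Φ x) + θ ^ 2 / 2 * g y with hh
  have hhint : Integrable h μ := by
    apply Integrable.add
    · exact (integrable_const 1).add (((hint x).sub (integrable_const (Φ x))).const_mul θ)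
    · exact hgint.const_mul _
  -- key pointwise bound
  have key : ∀ y, Real.exp (θ * Φ y) ≤ Real.exp (θ * Φ x) * h y := by
    intro y
    have hmax : max (θ * (Φ y - Φ x)) 0 = θ * max (Φ y - Φ x) 0 := by
      rcases le_total (Φ y - Φ x) 0 with hc | hc
      · rw [max_eq_right hc, max_eq_right (by nlinarith), mul_zero]
      · rw [max_eq_left hc, max_eq_left (by nlinarith)]
    have hq := exp_le_quad (θ * (Φ y - Φ x))
    rw [hmax] at hq
    have : Real.exp (θ * Φ y) = Real.exp (θ * Φ x) * Real.exp (θ * (Φ y - Φ x)) := by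
      rw [← Real.exp_add]; ring_nf
    rw [this]
    have hE : (0:ℝ) < Real.exp (θ * Φ x) := Real.exp_pos _
    have : Real.exp (θ * (Φ y - Φ x)) ≤ h y := by
      refine hq.trans_eq ?_
      simp only [hh, hg]
      ring
    nlinarith
  have hh0 : ∀ y, 0 ≤ h y := by
    intro y
    have h1 : 0 < Real.exp (θ * Φ x) * h y :=
      lt_of_lt_of_le (Real.exp_pos _) (key y)
    exact le_of_lt (lt_of_mul_lt_mul_left (by simpa using h1) (Real.exp_pos (θ * Φ x)).le)
  have hexpint : Integrable (fun y => Real.exp (θ * Φ y)) μ := by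
    refine Integrable.mono' (hhint.const_mul (Real.exp (θ * Φ x)))
      ((Real.measurable_exp.comp (hΦmeas.const_mul θ)).aestronglyMeasurable)
      (Filter.Eventually.of_forall fun y => ?_)
    rw [Real.norm_eq_abs, abs_of_nonneg (Real.exp_pos _).le]
    exact key y
  -- rewrite lintegral as ofReal of integral
  rw [← ofReal_integral_eq_lintegral_ofReal hexpint
    (Filter.Eventually.of_forall fun y => (Real.exp_pos _).le)]
  apply ENNReal.ofReal_le_ofReal
  -- integral bound
  have step1 : ∫ y, Real.exp (θ * Φ y) ∂μ ≤ ∫ y, Real.exp (θ * Φ x) * h y ∂μ :=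
    integral_mono hexpint (hhint.const_mul _) key
  have hInth : ∫ y, h y ∂μ
      = 1 + θ * ((∫ y, Φ y ∂μ) - Φ x) + θ ^ 2 / 2 * ∫ y, g y ∂μ := by
    have iΔ : Integrable (fun y => Φ y - Φ x) μ := by
      exact (hint x).sub (integrable_const (Φ x))
    have i1 : Integrable (fun y => 1 + θ * (Φ y - Φ x)) μ := (integrable_const 1).add (iΔ.const_mul θ)
    have i2 : Integrable (fun y => θ ^ 2 / 2 * g y) μ := hgint.const_mul _
    rw [hh]
    rw [integral_add i1 i2, integral_add (integrable_const 1) (iΔ.const_mul θ),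
      integral_const, integral_const_mul, integral_const_mul,
      integral_sub (hint x) (integrable_const (Φ x)), integral_const]
    simp [measure_univ, hμ]
  have hG0 : 0 ≤ ∫ y, g y ∂μ := integral_nonneg hg0
  have hGL : ∫ y, g y ∂μ ≤ L₂ := by
    rw [integral_eq_lintegral_of_nonneg_ae (Filter.Eventually.of_forall hg0)
      hgmeas.aestronglyMeasurable]
    calc (∫⁻ y, ENNReal.ofReal (g y) ∂μ).toReal
        ≤ (ENNReal.ofReal L₂).toReal :=
          ENNReal.toReal_mono ENNReal.ofReal_ne_top (hL₂ x)
      _ = L₂ := ENNReal.toReal_ofReal hL₂0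
  have hdrift' := hdr x hx
  have hE : (0:ℝ) < Real.exp (θ * Φ x) := Real.exp_pos _
  calc ∫ y, Real.exp (θ * Φ y) ∂μ
      ≤ ∫ y, Real.exp (θ * Φ x) * h y ∂μ := step1
    _ = Real.exp (θ * Φ x) * ∫ y, h y ∂μ := integral_const_mul _ _
    _ ≤ (1 - γ * θ / 2) * Real.exp (θ * Φ x) := by
        rw [hInth]
        have h1 : θ * ((∫ y, Φ y ∂μ) - Φ x) ≤ θ * (-γ) :=
          mul_le_mul_of_nonneg_left hdrift' hθ.le
        have h2 : θ ^ 2 / 2 * ∫ y, g y ∂μ ≤ θ ^ 2 / 2 * L₂ :=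
          mul_le_mul_of_nonneg_left hGL (by positivity)
        have h3 : θ ^ 2 / 2 * L₂ ≤ θ * γ / 2 := by nlinarith
        nlinarith

/-- `Φ` satisfies the drift condition with parameters `γ > 0` and `K ≥ 0`:
`Φ` is integrable with respect to `κ(x,·)` for every `x`, and
`∫ Φ dκ(x,·) − Φ(x) ≤ −γ` whenever `Φ(x) > K`. -/
def SatisfiesDrift {S : Type*} [MeasurableSpace S]
    (κ : Kernel S S) (Φ : S → ℝ) (γ K : ℝ) : Prop :=
  (∀ x, Integrable Φ (κ x)) ∧
    ∀ x, K < Φ x → (∫ y, Φ y ∂(κ x)) - Φ x ≤ -γ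

/-- Theorem 6, first part: under the drift condition and the second-moment
exponential bound `L₂` with `θ L₂ ≤ γ`, the function `exp(θΦ)` is a geometric
Lyapunov function with geometric drift size `1 − γθ/2` and exception parameter
`exp(θK)`: for every `x` with `Φ(x) > K`,
`∫ exp(θ Φ) dκ(x,·) ≤ (1 − γθ/2) exp(θ Φ(x))`. -/
theorem exp_geometric_lyapunov {S : Type*} [MeasurableSpace S]
    (κ : Kernel S S) [IsMarkovKernel κ]
    (Φ : S → ℝ) (hΦmeas : Measurable Φ) (hΦ0 : ∀ x, 0 ≤ Φ x)
    (γ K : ℝ) (hγ : 0 < γ) (hK : 0 ≤ K)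
    (hdrift : SatisfiesDrift κ Φ γ K)
    (θ : ℝ) (hθ : 0 < θ)
    (L₂ : ℝ) (hL₂0 : 0 ≤ L₂)
    (hL₂ : ∀ x, ∫⁻ y, ENNReal.ofReal
        ((Φ y - Φ x) ^ 2 * Real.exp (θ * max (Φ y - Φ x) 0)) ∂(κ x)
      ≤ ENNReal.ofReal L₂)
    (hθL₂ : θ * L₂ ≤ γ) :
    ∀ x, K < Φ x →
      ∫⁻ y, ENNReal.ofReal (Real.exp (θ * Φ y)) ∂(κ x)
        ≤ ENNReal.ofReal ((1 - γ * θ / 2) * Real.exp (θ * Φ x)) := by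
  exact exp_geometric_lyapunov' κ Φ hΦmeas hΦ0 γ K hγ hK hdrift.1 hdrift.2 θ hθ L₂ hL₂0 hL₂ hθL₂

end
end
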